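/- arXiv:1006.5205 — 11 statements merged into one kernel-verified Lean document; each statement's English description precedes it below -/
import Mathlib

section
/- Theorem A**: Let G be an abelian group and φ an endomorphism of G. The following are equivalent: (i) φ admits at least one null string; (ii) there exists a countably infinite family of pairwise disjoint null strings of φ; (iii) sc(φ) ∩ ker_∞(φ) ≠ 0, i.e. the intersection of the surjective core of φ with the hyperkernel of φ is a nonzero subgroup. -/
/-- A string of a self-map `f` is a sequence of pairwise distinct elements
with `f (x (n+1)) = x n` for all `n`. -/
def IsString {G : Type*} (f : G → G) (x : ℕ → G) : Prop :=
  Function.Injective x ∧ ∀ n : ℕ, f (x (n + 1)) = x n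

/-- A null string: a string with nonzero first term which is killed by some
positive iterate. -/
def IsNullString {G : Type*} [AddCommGroup G] (f : G → G) (x : ℕ → G) : Prop :=
  IsString f x ∧ x 0 ≠ 0 ∧ ∃ k : ℕ, 0 < k ∧ f^[k] (x 0) = 0

/-- The surjective core of an endomorphism: the join of all subgroups `H`
with `φ(H) = H`. -/
def surjCore {G : Type*} [AddCommGroup G] (φ : G →+ G) : AddSubgroup G :=
  sSup {H : AddSubgroup G | ⇑φ '' (H : Set G) = (H : Set G)}

lemma map_surjCore {G : Type*} [AddCommGroup G] (φ : G →+ G) :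
    AddSubgroup.map φ (surjCore φ) = surjCore φ := by
  have key : ∀ H ∈ {H : AddSubgroup G | ⇑φ '' (H : Set G) = (H : Set G)},
      AddSubgroup.map φ H = H := fun H hH =>
    SetLike.coe_injective (by rw [AddSubgroup.coe_map]; exact hH)
  unfold surjCore
  rw [(AddSubgroup.gc_map_comap φ).l_sSup, sSup_eq_iSup]
  apply le_antisymm
  · refine iSup₂_le fun H hH => ?_
    rw [key H hH]
    exact le_iSup₂ (f := fun (H : AddSubgroup G) (_ : H ∈ _) => H) H hH
  · refine iSup₂_le fun H hH => ?_
    rw [← key H hH]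
    exact le_iSup₂ (f := fun (H : AddSubgroup G) (_ : H ∈ _) => AddSubgroup.map φ H) H hH

theorem theoremAstarstar {G : Type*} [AddCommGroup G] (φ : G →+ G) :
    List.TFAE
      [ (∃ x : ℕ → G, IsNullString (⇑φ) x),
        (∃ S : ℕ → (ℕ → G), (∀ k : ℕ, IsNullString (⇑φ) (S k)) ∧
          Pairwise fun i j => Disjoint (Set.range (S i)) (Set.range (S j))),
        (∃ x : G, x ≠ 0 ∧ x ∈ surjCore φ ∧ ∃ n : ℕ, (⇑φ)^[n] x = 0) ] := by
  tfae_have 2 → 1 := fun ⟨S, hS, _⟩ => ⟨S 0, hS 0⟩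
  tfae_have 1 → 3 := by
    rintro ⟨x, ⟨hxinj, hxstr⟩, hx0, k, hk, hkx⟩
    set gens : Set G := Set.range x ∪ Set.range (fun j => (⇑φ)^[j] (x 0)) with hgens
    have himg : ⇑φ '' gens = gens := by
      apply Set.Subset.antisymm
      · rintro _ ⟨g, hg, rfl⟩
        rw [hgens] at hg ⊢
        simp only [Set.mem_union, Set.mem_range] at hg ⊢
        rcases hg with ⟨n, rfl⟩ | ⟨j, rfl⟩
        · cases n with
          | zero => exact Or.inr ⟨1, by simp⟩
          | succ m => exact Or.inl ⟨m, (hxstr m).symm⟩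
        · exact Or.inr ⟨j + 1, Function.iterate_succ_apply' _ _ _⟩
      · rw [hgens]
        rintro g (⟨n, rfl⟩ | ⟨j, rfl⟩)
        · exact ⟨x (n + 1), Or.inl ⟨n + 1, rfl⟩, hxstr n⟩
        · cases j with
          | zero => exact ⟨x 1, Or.inl ⟨1, rfl⟩, by simpa using hxstr 0⟩
          | succ m =>
            exact ⟨(⇑φ)^[m] (x 0), Or.inr ⟨m, rfl⟩,
              (Function.iterate_succ_apply' _ _ _).symm⟩
    have hHmem : AddSubgroup.closure gens ∈
        {H : AddSubgroup G | ⇑φ '' (H : Set G) = (H : Set G)} := by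
      have : AddSubgroup.map φ (AddSubgroup.closure gens) = AddSubgroup.closure gens := by
        rw [AddMonoidHom.map_closure, himg]
      rw [Set.mem_setOf_eq, ← AddSubgroup.coe_map, this]
    have hle : AddSubgroup.closure gens ≤ surjCore φ := le_sSup hHmem
    exact ⟨x 0, hx0, hle (AddSubgroup.subset_closure (Or.inl ⟨0, rfl⟩)), k, hkx⟩
  tfae_have 3 → 2 := by
    rintro ⟨x, hx0, hxS, n, hxn⟩
    classical
    -- membership is preserved by φ
    have hstep : ∀ z, z ∈ surjCore φ → φ z ∈ surjCore φ := fun z hz => by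
      rw [← map_surjCore φ]; exact ⟨z, hz, rfl⟩
    have hiter : ∀ (t : ℕ) (z : G), z ∈ surjCore φ → (⇑φ)^[t] z ∈ surjCore φ := by
      intro t
      induction t with
      | zero => exact fun z hz => hz
      | succ m ih => intro z hz
                     rw [Function.iterate_succ_apply']
                     exact hstep _ (ih z hz)
    -- minimal n, and the element x' with φ x' = 0
    have hex : ∃ m : ℕ, (⇑φ)^[m] x = 0 := ⟨n, hxn⟩
    set n₀ := Nat.find hex with hn₀
    have hn₀spec : (⇑φ)^[n₀] x = 0 := Nat.find_spec hex
    have hn₀pos : 0 < n₀ := by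
      rcases Nat.eq_zero_or_pos n₀ with h | h
      · exact absurd (by simpa [h] using hn₀spec) hx0
      · exact h
    set x' : G := (⇑φ)^[n₀ - 1] x with hx'
    have hx'ne : x' ≠ 0 := Nat.find_min hex (Nat.sub_lt hn₀pos one_pos)
    have hφx' : φ x' = 0 := by
      have : (⇑φ)^[n₀ - 1 + 1] x = 0 := by
        rwa [Nat.sub_add_cancel hn₀pos]
      rwa [Function.iterate_succ_apply'] at this
    have hx'S : x' ∈ surjCore φ := hiter _ _ hxS
    -- backward chain inside surjCore
    have hsurj : ∀ z : {a // a ∈ surjCore φ}, ∃ w : {a // a ∈ surjCore φ}, φ (w : G) = (z : G) := by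
      intro z
      have : (z : G) ∈ AddSubgroup.map φ (surjCore φ) := by rw [map_surjCore]; exact z.2
      rcases this with ⟨w, hw, hww⟩
      exact ⟨⟨w, hw⟩, hww⟩
    choose g hg using hsurj
    set Y : ℕ → G := fun m => ((g^[m] ⟨x', hx'S⟩ : {a // a ∈ surjCore φ}) : G) with hY
    have hY0 : Y 0 = x' := rfl
    have hYstr : ∀ m, φ (Y (m + 1)) = Y m := by
      intro m
      have : g^[m + 1] ⟨x', hx'S⟩ = g (g^[m] ⟨x', hx'S⟩) := Function.iterate_succ_apply' _ _ _
      rw [hY]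
      simp only [this]
      exact hg _
    have hYiter : ∀ (t m : ℕ), (⇑φ)^[t] (Y (m + t)) = Y m := by
      intro t
      induction t with
      | zero => intro m; rfl
      | succ s ih =>
        intro m
        have h1 : m + (s + 1) = (m + 1) + s := by omega
        rw [h1, Function.iterate_succ_apply']
        rw [ih (m + 1), hYstr m]
    have hkill : ∀ t : ℕ, 1 ≤ t → (⇑φ)^[t] x' = 0 := by
      intro t ht
      obtain ⟨s, rfl⟩ := Nat.exists_eq_add_of_le ht
      rw [add_comm, Function.iterate_add_apply, Function.iterate_one, hφx',
        iterate_map_zero]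
    have hYkey : ∀ i j, i < j → Y i = Y j → False := by
      intro i j hlt hij
      have h0 := hYiter i (j - i)
      rw [Nat.sub_add_cancel hlt.le, ← hij] at h0
      have h2 := hYiter i 0
      rw [Nat.zero_add] at h2
      rw [h2, hY0] at h0
      have h3 := hYiter (j - i) 0
      rw [Nat.zero_add, ← h0, hkill (j - i) (by omega), hY0] at h3
      exact hx'ne h3.symm
    have hYinj : Function.Injective Y := by
      intro i j hij
      rcases lt_trichotomy i j with h | h | h
      · exact absurd (hYkey i j h hij) not_false
      · exact h
      · exact absurd (hYkey j i h hij.symm) not_false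
    -- the strings
    set S : ℕ → ℕ → G := fun k m => Y (m + k + 1) - Y m with hS
    -- exact depth computation
    have hdepth1 : ∀ k m, (⇑φ)^[m + k + 1] (S k m) = x' := by
      intro k m
      rw [hS]
      simp only
      rw [iterate_map_sub]
      have e1 : (⇑φ)^[m + k + 1] (Y (m + k + 1)) = x' := by
        have := hYiter (m + k + 1) 0
        rw [Nat.zero_add] at this
        rw [this, hY0]
      have e2 : (⇑φ)^[m + k + 1] (Y m) = 0 := by
        have h1 : m + k + 1 = (k + 1) + m := by omega
        rw [h1, Function.iterate_add_apply]
        have h2 := hYiter m 0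
        rw [Nat.zero_add] at h2
        rw [h2, hY0, hkill (k + 1) (by omega)]
      rw [e1, e2, sub_zero]
    have hdepth0 : ∀ k m, (⇑φ)^[m + k + 2] (S k m) = 0 := by
      intro k m
      have h1 : m + k + 2 = 1 + (m + k + 1) := by omega
      rw [h1, Function.iterate_add_apply, hdepth1, Function.iterate_one, hφx']
    have hdepth : ∀ k m k' m', S k m = S k' m' → m + k = m' + k' := by
      intro k m k' m' hEq
      by_contra hne
      wlog hlt : m + k < m' + k' generalizing k m k' m'
      · exact this k' m' k m hEq.symm (by omega) (by omega)
      have : (⇑φ)^[m' + k' + 1] (S k m) = 0 := by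
        have h1 : m' + k' + 1 = (m' + k' + 1 - (m + k + 2)) + (m + k + 2) := by omega
        rw [h1, Function.iterate_add_apply, hdepth0, iterate_map_zero]
      rw [hEq, hdepth1] at this
      exact hx'ne this
    refine ⟨S, fun k => ⟨⟨?_, ?_⟩, ?_, k + 2, by omega, ?_⟩, ?_⟩
    · intro i j hij
      have := hdepth k i k j hij
      omega
    · intro m
      rw [hS]
      simp only
      rw [map_sub, show m + 1 + k + 1 = (m + k + 1) + 1 by omega, hYstr, hYstr]
    · rw [hS]
      simp only
      intro h
      have : Y (0 + k + 1) = Y 0 := by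
        have := sub_eq_zero.mp h
        exact this
      exact absurd (hYinj this) (by omega)
    · have := hdepth0 k 0
      simpa using this
    · intro i j hij
      rw [Set.disjoint_left]
      rintro a ⟨m, rfl⟩ ⟨p, hp⟩
      have h1 : p + j = m + i := hdepth j p i m hp
      have h2 : p = m := by
        rw [hS] at hp
        simp only at hp
        rw [show p + j + 1 = m + i + 1 by omega] at hp
        exact hYinj (sub_right_injective hp)
      omega
  tfae_finish
end

section
/- Proposition (garlands of null strings): Let G be an abelian group, φ an endomorphism of G, and S = (x_n)_{n∈ℕ} a string of φ with x_0 ≠ 0 and φ(x_0) = 0 (so S is a null string). Then for every integer k ≥ 1 the sequence S_k = (x_n + x_{n+k})_{n∈ℕ} is a null string of φ, and the strings S_k, for k ≥ 1, are pairwise disjoint. -/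
theorem garland_of_null_string {G : Type*} [AddCommGroup G] (φ : G →+ G)
    (x : ℕ → G) (hx : IsString (⇑φ) x) (h0 : x 0 ≠ 0) (h1 : φ (x 0) = 0) :
    (∀ k : ℕ, 1 ≤ k → IsNullString (⇑φ) (fun n => x n + x (n + k))) ∧
    (∀ k l : ℕ, 1 ≤ k → 1 ≤ l → k ≠ l →
      Disjoint (Set.range fun n => x n + x (n + k))
        (Set.range fun n => x n + x (n + l))) := by
  obtain ⟨hinj, hstep⟩ := hx
  have hiter : ∀ j n : ℕ, φ^[j] (x n) = if j ≤ n then x (n - j) else 0 := by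
    intro j
    induction j with
    | zero => intro n; simp
    | succ j ih =>
      intro n
      rw [Function.iterate_succ_apply', ih n]
      rcases lt_trichotomy j n with h | h | h
      · rw [if_pos h.le, if_pos (show j + 1 ≤ n from h)]
        have hn : n - j = (n - (j + 1)) + 1 := by omega
        rw [hn, hstep]
      · subst h
        rw [if_pos le_rfl, if_neg (by omega)]
        simpa using h1
      · rw [if_neg (by omega), if_neg (by omega)]
        simp
  have hiterAdd : ∀ j : ℕ, ∀ a b : G, φ^[j] (a + b) = φ^[j] a + φ^[j] b := by
    intro j a b
    exact iterate_map_add φ j a b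
  have key0 : ∀ a b c d : ℕ, a < b → c < d → b ≤ d →
      x a + x b = x c + x d → a = c ∧ b = d := by
    intro a b c d hab hcd hbd heq
    have hb : b = d := by
      by_contra hne
      have hbd' : b < d := lt_of_le_of_ne hbd hne
      have h2 := congrArg (φ^[d]) heq
      rw [hiterAdd, hiterAdd, hiter, hiter, hiter, hiter] at h2
      rw [if_neg (by omega), if_neg (by omega), if_neg (by omega),
        if_pos le_rfl] at h2
      simp only [Nat.sub_self, zero_add, add_zero] at h2
      exact h0 h2.symm
    subst hb
    refine ⟨hinj ?_, rfl⟩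
    exact add_right_cancel heq
  have key : ∀ a b c d : ℕ, a < b → c < d →
      x a + x b = x c + x d → a = c ∧ b = d := by
    intro a b c d hab hcd heq
    rcases le_total b d with h | h
    · exact key0 a b c d hab hcd h heq
    · obtain ⟨h1', h2'⟩ := key0 c d a b hcd hab h heq.symm
      exact ⟨h1'.symm, h2'.symm⟩
  constructor
  · intro k hk
    refine ⟨⟨?_, ?_⟩, ?_, k + 1, by omega, ?_⟩
    · intro m n h
      simp only at h
      exact (key m (m + k) n (n + k) (by omega) (by omega) h).1
    · intro n
      simp only [map_add, hstep]
      congr 1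
      have : n + 1 + k = (n + k) + 1 := by omega
      rw [this, hstep]
    · simp only
      intro h
      have h2 := congrArg (φ^[k]) h
      rw [hiterAdd, hiter, hiter] at h2
      rw [if_neg (by omega), if_pos (by omega)] at h2
      simp only [zero_add, Nat.add_sub_cancel_left] at h2
      rw [Function.iterate_fixed (map_zero φ)] at h2
      simp at h2
      exact h0 h2
    · simp only
      rw [hiterAdd, hiter, hiter, if_neg (by omega), if_neg (by omega)]
      simp
  · intro k l hk hl hkl
    rw [Set.disjoint_left]
    rintro a ⟨m, rfl⟩ ⟨n, hn⟩
    simp only at hn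
    have := key n (n + l) m (m + k) (by omega) (by omega) hn
    omega
end

section
/- Corollary of Theorem A: Let G be an abelian group and φ a surjective endomorphism of G. Then φ admits no string if and only if every element of G is a periodic point of φ (i.e. G = Per(φ)). -/
/-- A point is periodic if some positive iterate fixes it. -/
def IsPerPt {G : Type*} (f : G → G) (x : G) : Prop :=
  ∃ n : ℕ, 0 < n ∧ f^[n] x = x

lemma iter_map_zero' {G : Type*} [AddCommGroup G] (φ : G →+ G) (n : ℕ) :
    (⇑φ)^[n] 0 = 0 := by
  induction n with
  | zero => rfl
  | succ n ih => rw [Function.iterate_succ_apply, map_zero, ih]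

lemma iter_map_sub' {G : Type*} [AddCommGroup G] (φ : G →+ G) (n : ℕ) (a b : G) :
    (⇑φ)^[n] (a - b) = (⇑φ)^[n] a - (⇑φ)^[n] b := by
  induction n with
  | zero => rfl
  | succ n ih =>
    rw [Function.iterate_succ_apply', Function.iterate_succ_apply',
      Function.iterate_succ_apply', ih, map_sub]

theorem corollaryA {G : Type*} [AddCommGroup G] (φ : G →+ G)
    (hsurj : Function.Surjective φ) :
    (¬ ∃ x : ℕ → G, IsString (⇑φ) x) ↔ ∀ x : G, IsPerPt (⇑φ) x := by
  constructor
  · intro hns x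
    by_contra hx
    apply hns
    set s := Function.surjInv hsurj with hs
    have hsf : ∀ y, φ (s y) = y := fun y => Function.surjInv_eq hsurj y
    have hli : Function.LeftInverse (⇑φ) s := hsf
    refine ⟨fun n => s^[n] x, ?_, ?_⟩
    · -- injectivity
      have key : ∀ k : ℕ, 0 < k → s^[k] x ≠ x := by
        intro k hk hkx
        apply hx
        refine ⟨k, hk, ?_⟩
        conv_lhs => rw [← hkx]
        exact (hli.iterate k) x
      intro m n hmn
      simp only at hmn
      by_contra hne
      rcases Nat.lt_or_ge m n with h | h
      · have : (⇑φ)^[m] (s^[m] x) = (⇑φ)^[m] (s^[n] x) := by rw [hmn]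
        rw [hli.iterate m] at this
        have hn : s^[n] x = s^[m] (s^[n - m] x) := by
          rw [← Function.iterate_add_apply]
          congr 1
          omega
        rw [hn, hli.iterate m] at this
        exact key (n - m) (by omega) this.symm
      · have hlt : n < m := lt_of_le_of_ne h (Ne.symm hne)
        have : (⇑φ)^[n] (s^[n] x) = (⇑φ)^[n] (s^[m] x) := by rw [hmn]
        rw [hli.iterate n] at this
        have hm : s^[m] x = s^[n] (s^[m - n] x) := by
          rw [← Function.iterate_add_apply]
          congr 1
          omega
        rw [hm, hli.iterate n] at this
        exact key (m - n) (by omega) this.symm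
    · intro n
      simp only
      rw [Function.iterate_succ_apply']
      exact hsf _
  · rintro hper ⟨x, hinj, hstr⟩
    have chain : ∀ k n : ℕ, (⇑φ)^[k] (x (n + k)) = x n := by
      intro k
      induction k with
      | zero => intro n; simp
      | succ k ih =>
        intro n
        rw [Function.iterate_succ_apply, show n + (k + 1) = (n + k) + 1 from rfl,
          hstr (n + k), ih n]
    obtain ⟨p, hp, hxp⟩ := hper (x 0)
    set u : G := x p - x 0 with hu
    have hup : (⇑φ)^[p] u = 0 := by
      have h1 : (⇑φ)^[p] (x p) = x 0 := by
        have := chain p 0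
        simpa using this
      rw [hu, iter_map_sub' φ p, h1, hxp, sub_self]
    obtain ⟨q, hq, huq⟩ := hper u
    have hmul : ∀ m : ℕ, (⇑φ)^[m * q] u = u := by
      intro m
      induction m with
      | zero => simp
      | succ m ih =>
        rw [show (m + 1) * q = m * q + q from by ring, Function.iterate_add_apply,
          huq, ih]
    have hu0 : u = 0 := by
      have h1 : (⇑φ)^[p * q] u = u := hmul p
      have h2 : p * q = (p * q - p) + p := by
        have : p ≤ p * q := Nat.le_mul_of_pos_right p hq
        omega
      rw [h2, Function.iterate_add_apply, hup] at h1
      rw [← h1, iter_map_zero']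
    have : x p = x 0 := by
      have := sub_eq_zero.mp (hu ▸ hu0)
      exact this
    have hp0 : p = 0 := hinj this
    omega
end

section
/- Corollary of Theorem A*: Let G be an abelian group and φ a surjective endomorphism of G. Then φ admits no non-singular string if and only if every element of G is a quasi-periodic point of φ (i.e. G = QPer(φ)). -/
/-- A point is quasi-periodic if two distinct iterates agree on it. -/
def IsQPerPt {G : Type*} (f : G → G) (x : G) : Prop :=
  ∃ n m : ℕ, n < m ∧ f^[n] x = f^[m] x

/-- A non-singular string: a string whose first term is not quasi-periodic. -/
def IsNonSingString {G : Type*} (f : G → G) (x : ℕ → G) : Prop :=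
  IsString f x ∧ ¬ IsQPerPt f (x 0)

theorem corollaryAstar {G : Type*} [AddCommGroup G] (φ : G →+ G)
    (hsurj : Function.Surjective φ) :
    (¬ ∃ x : ℕ → G, IsNonSingString (⇑φ) x) ↔ ∀ x : G, IsQPerPt (⇑φ) x := by
  constructor
  · intro h x
    by_contra hx
    -- build a string starting at x using a section of φ
    let ψ : G → G := fun g => Classical.choose (hsurj g)
    have hψ : ∀ g, φ (ψ g) = g := fun g => Classical.choose_spec (hsurj g)
    have hcancel : ∀ k g, (⇑φ)^[k] (ψ^[k] g) = g := by
      intro k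
      induction k with
      | zero => intro g; simp
      | succ k ih =>
        intro g
        rw [Function.iterate_succ_apply (⇑φ), Function.iterate_succ_apply' ψ, hψ, ih]
    refine h ⟨fun n => ψ^[n] x, ⟨?_, ?_⟩, ?_⟩
    · have main : ∀ n m : ℕ, n < m → ψ^[n] x = ψ^[m] x → False := by
        intro n m hlt hnm
        have key : ψ^[m - n] x = x := by
          have this : (⇑φ)^[n] (ψ^[m] x) = (⇑φ)^[n] (ψ^[n] x) := by rw [hnm]
          rw [hcancel] at this
          have hm : ψ^[m] x = ψ^[n] (ψ^[m - n] x) := by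
            rw [← Function.iterate_add_apply]
            congr 1; omega
          rw [hm, hcancel] at this
          exact this
        apply hx
        refine ⟨0, m - n, by omega, ?_⟩
        have := congrArg (⇑φ)^[m - n] key
        rw [hcancel] at this
        simpa using this
      intro n m hnm
      dsimp only at hnm
      rcases lt_trichotomy n m with h' | h' | h'
      · exact absurd hnm (fun e => main n m h' e)
      · exact h'
      · exact absurd hnm.symm (fun e => main m n h' e)
    · intro n
      simp only [Function.iterate_succ_apply']
      exact hψ _
    · simpa using hx
  · rintro h ⟨x, hstr, hq⟩
    exact hq (h (x 0))
end

section
/- Corollary of Theorem A**: Let G be an abelian group and φ a surjective endomorphism of G. Then φ admits no null string if and only if φ is injective. -/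
theorem corollaryAstarstar {G : Type*} [AddCommGroup G] (φ : G →+ G)
    (hsurj : Function.Surjective φ) :
    (¬ ∃ x : ℕ → G, IsNullString (⇑φ) x) ↔ Function.Injective φ := by
  constructor
  · intro hns
    rw [injective_iff_map_eq_zero]
    intro a ha
    by_contra ha0
    obtain ⟨x, hx0, hxs⟩ : ∃ x : ℕ → G, x 0 = a ∧ ∀ n, φ (x (n + 1)) = x n := by
      choose g hg using hsurj
      exact ⟨fun n => Nat.rec a (fun _ y => g y) n, rfl, fun n => hg _⟩
    have iter0 : ∀ e : ℕ, (⇑φ)^[e] (0 : G) = 0 :=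
      fun e => Function.iterate_fixed (map_zero φ) e
    have key : ∀ j m : ℕ, (⇑φ)^[j] (x (j + m)) = x m := by
      intro j
      induction j with
      | zero => intro m; simp
      | succ j ih =>
        intro m
        have h1 : j + 1 + m = (j + m) + 1 := by ring
        rw [h1, Function.iterate_succ_apply, hxs, ih]
    have hxd : ∀ d : ℕ, 0 < d → x d ≠ a := by
      intro d hd hxda
      obtain ⟨e, rfl⟩ := Nat.exists_eq_succ_of_ne_zero hd.ne'
      have h1 : (⇑φ)^[e + 1] (x (e + 1)) = x 0 := by
        have := key (e + 1) 0; simpa using this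
      rw [hxda, Function.iterate_succ_apply, ha, iter0, hx0] at h1
      exact ha0 h1.symm
    have hinj : Function.Injective x := by
      have hle : ∀ n m : ℕ, n ≤ m → x n = x m → n = m := by
        intro n m hnm hxe
        obtain ⟨d, rfl⟩ := Nat.exists_eq_add_of_le hnm
        have h1 : (⇑φ)^[n] (x (n + 0)) = x 0 := key n 0
        have h2 : (⇑φ)^[n] (x (n + d)) = x d := key n d
        rw [Nat.add_zero] at h1
        rw [hxe] at h1
        have hxda : x d = a := by rw [← h2, h1, hx0]
        rcases Nat.eq_zero_or_pos d with hd | hd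
        · simp [hd]
        · exact absurd hxda (hxd d hd)
      intro n m hxe
      rcases le_total n m with h | h
      · exact hle n m h hxe
      · exact (hle m n h hxe.symm).symm
    exact hns ⟨x, ⟨hinj, hxs⟩, hx0 ▸ ha0, 1, one_pos, by simp [hx0, ha]⟩
  · rintro hinj ⟨x, ⟨-, -⟩, hx0, k, -, hk0⟩
    have : Function.Injective ((⇑φ)^[k]) := hinj.iterate k
    exact hx0 (this (by rw [hk0, Function.iterate_fixed (map_zero φ) k]))
end

section
/- Proposition: Let G be an abelian group and φ an endomorphism of G. If φ admits a singular string, then φ admits a null string. -/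
/-- A singular string: a string whose first term is quasi-periodic. -/
def IsSingString {G : Type*} (f : G → G) (x : ℕ → G) : Prop :=
  IsString f x ∧ IsQPerPt f (x 0)

private lemma string_iter {G : Type*} (f : G → G) (x : ℕ → G)
    (hstr : ∀ n, f (x (n + 1)) = x n) : ∀ k j, f^[k] (x (j + k)) = x j := by
  intro k
  induction k with
  | zero => simp
  | succ k ih =>
    intro j
    have h1 : j + (k + 1) = (j + 1) + k := by omega
    rw [h1, Function.iterate_succ_apply', ih (j + 1), hstr]

private lemma iter_sub {G : Type*} [AddCommGroup G] (φ : G →+ G) (k : ℕ) (a b : G) :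
    (⇑φ)^[k] (a - b) = (⇑φ)^[k] a - (⇑φ)^[k] b := by
  induction k generalizing a b with
  | zero => simp
  | succ k ih => simp [Function.iterate_succ_apply', ih, map_sub]

theorem singular_string_gives_null_string {G : Type*} [AddCommGroup G]
    (φ : G →+ G) (h : ∃ x : ℕ → G, IsSingString (⇑φ) x) :
    ∃ y : ℕ → G, IsNullString (⇑φ) y := by
  obtain ⟨x, ⟨⟨hinj, hstr⟩, n, m, hnm, hq⟩⟩ := h
  set d : ℕ := m - n with hd
  have hdpos : 0 < d := by omega
  have hmnd : m = n + d := by omega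
  set y : ℕ → G := fun j => x j - x (j + d) with hy
  -- string property for y
  have hystr : ∀ j, φ (y (j + 1)) = y j := by
    intro j
    have h1 : j + 1 + d = (j + d) + 1 := by omega
    simp only [hy, map_sub, hstr j, h1, hstr (j + d)]
  -- first term nonzero
  have hy0 : y 0 ≠ 0 := by
    simp only [hy, zero_add, sub_ne_zero]
    intro hc
    have := hinj hc
    omega
  -- killed by φ^[m]
  have hm0 : 0 < m := by omega
  have hkill : (⇑φ)^[m] (y 0) = 0 := by
    have hxd : (⇑φ)^[d] (x d) = x 0 := by
      have := string_iter (⇑φ) x hstr d 0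
      simpa using this
    have h2 : (⇑φ)^[m] (x d) = (⇑φ)^[n] (x 0) := by
      rw [hmnd, Function.iterate_add_apply, hxd]
    simp only [hy, zero_add, iter_sub, h2, sub_eq_zero]
    exact hq.symm
  -- injectivity of y
  have hyinj : Function.Injective y := by
    have key : ∀ i j : ℕ, i < j → y i = y j → False := by
      intro i j hij heq
      set p : ℕ := j - i with hp
      have hppos : 0 < p := by omega
      have hper : (⇑φ)^[p] (y j) = y j := by
        have := string_iter (⇑φ) y hystr p i
        rw [show i + p = j by omega] at this
        rw [this, ← heq]
      have hperN : ∀ N : ℕ, (⇑φ)^[p * N] (y j) = y j := by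
        intro N
        induction N with
        | zero => simp
        | succ N ih =>
          rw [Nat.mul_succ, Function.iterate_add_apply, hper, ih]
      have hy0j : (⇑φ)^[j] (y j) = y 0 := by
        have := string_iter (⇑φ) y hystr j 0
        simpa using this
      have hper0 : (⇑φ)^[p * m] (y 0) = y 0 := by
        rw [← hy0j, ← Function.iterate_add_apply, Nat.add_comm,
          Function.iterate_add_apply, hperN m]
      have hsplit : p * m = (p * m - m) + m := by
        have : m ≤ p * m := Nat.le_mul_of_pos_left m hppos
        omega
      have : y 0 = 0 := by
        rw [← hper0, hsplit, Function.iterate_add_apply, hkill]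
        exact Function.iterate_fixed (map_zero φ) _
      exact hy0 this
    intro i j hij
    by_contra hne
    rcases lt_trichotomy i j with h | h | h
    · exact key i j h hij
    · exact hne h
    · exact key j i h hij.symm
  exact ⟨y, ⟨hyinj, hystr⟩, hy0, m, hm0, hkill⟩
end

section
/- Proposition: Let G be an abelian group and φ an endomorphism of G. If φ is surjective and not injective, then φ admits a null string. -/
theorem surjective_not_injective_gives_null_string {G : Type*} [AddCommGroup G]
    (φ : G →+ G) (hsurj : Function.Surjective φ) (hinj : ¬ Function.Injective φ) :
    ∃ x : ℕ → G, IsNullString (⇑φ) x := by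
  obtain ⟨a, ha0, hφa⟩ : ∃ a : G, a ≠ 0 ∧ φ a = 0 := by
    by_contra h
    push_neg at h
    exact hinj ((injective_iff_map_eq_zero φ).mpr fun a hφ =>
      by_contra fun hne => h a hne hφ)
  set x : ℕ → G := fun n => Nat.rec a (fun _ y => Function.surjInv hsurj y) n with hxdef
  have hx0 : x 0 = a := rfl
  have hstep : ∀ n, φ (x (n + 1)) = x n := fun n => Function.surjInv_eq hsurj (x n)
  have hiter : ∀ k n, φ^[k] (x (n + k)) = x n := by
    intro k
    induction k with
    | zero => intro n; simp
    | succ k ih =>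
      intro n
      rw [show n + (k + 1) = (n + 1) + k by omega, Function.iterate_succ',
        Function.comp_apply, ih, hstep]
  have key : ∀ m, x m = a → m = 0 := by
    intro m hm
    by_contra hne
    obtain ⟨l, rfl⟩ := Nat.exists_eq_succ_of_ne_zero hne
    have h1 : x l = 0 := by rw [← hstep l, hm, hφa]
    have h2 : x 0 = 0 := by
      have h3 := hiter l 0
      rw [zero_add, h1, Function.iterate_fixed (map_zero φ) l] at h3
      exact h3.symm
    exact ha0 (hx0 ▸ h2)
  have hmain : ∀ i j, i ≤ j → x i = x j → i = j := by
    intro i j hle heq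
    obtain ⟨m, rfl⟩ := Nat.exists_eq_add_of_le hle
    have hm : x m = a := by
      have h1 := hiter i m
      have h2 := hiter i 0
      rw [zero_add] at h2
      rw [show m + i = i + m by omega, ← heq, h2, hx0] at h1
      exact h1.symm
    have := key m hm
    omega
  refine ⟨x, ⟨⟨?_, hstep⟩, hx0 ▸ ha0, 1, one_pos, ?_⟩⟩
  · intro i j hij
    rcases le_total i j with h | h
    · exact hmain i j h hij
    · exact (hmain j i h hij.symm).symm
  · simpa [hx0] using hφa
end

section
/- Lemma: Let Γ be a set, λ : Γ → Γ a self-map, and S = (x_n)_{n∈ℕ} a pseudostring of λ whose set of terms {x_n : n ∈ ℕ} is infinite. Then there exists m ∈ ℕ such that the shifted sequence (x_{n+m})_{n∈ℕ} is a string of λ. Moreover, if λ is injective, then S itself is a string. -/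
private lemma ps_iter {Γ : Type*} (f : Γ → Γ) (x : ℕ → Γ)
    (hps : ∀ n : ℕ, f (x (n + 1)) = x n) :
    ∀ k n : ℕ, f^[k] (x (n + k)) = x n := by
  intro k
  induction k with
  | zero => intro n; simp
  | succ k ih =>
    intro n
    have h1 : n + (k + 1) = (n + k) + 1 := by omega
    rw [h1, Function.iterate_succ_apply, hps (n + k), ih n]

private lemma range_finite_of_periodic {G : Type*} (y : ℕ → G) (p : ℕ) (hp : 0 < p)
    (h : ∀ n, y (n + p) = y n) : (Set.range y).Finite := by
  have key : ∀ n : ℕ, ∃ r, r < p ∧ y n = y r := by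
    intro n
    induction n using Nat.strong_induction_on with
    | _ n ih =>
      rcases lt_or_ge n p with hn | hn
      · exact ⟨n, hn, rfl⟩
      · obtain ⟨r, hr, he⟩ := ih (n - p) (by omega)
        refine ⟨r, hr, ?_⟩
        have e : (n - p) + p = n := by omega
        calc y n = y ((n - p) + p) := by rw [e]
          _ = y (n - p) := h _
          _ = y r := he
  have hsub : Set.range y ⊆ y '' Set.Iio p := by
    rintro _ ⟨n, rfl⟩
    obtain ⟨r, hr, he⟩ := key n
    exact ⟨r, hr, he.symm⟩
  exact ((Set.finite_Iio p).image y).subset hsub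

private lemma ps_inj_collision {Γ : Type*} (f : Γ → Γ) (x : ℕ → Γ)
    (hps : ∀ n : ℕ, f (x (n + 1)) = x n)
    (hinf : (Set.range x).Infinite) (hf : Function.Injective f)
    {a b : ℕ} (hab : a < b) (heq : x a = x b) : False := by
  set p := b - a with hpdef
  have hp : 0 < p := by omega
  have hb : b = a + p := by omega
  -- forward periodicity from index a
  have hfor : ∀ k : ℕ, x (a + k) = x (a + k + p) := by
    intro k
    induction k with
    | zero =>
      simpa [← hb] using heq
    | succ k ih =>
      have h1 : f (x (a + (k + 1))) = x (a + k) := hps (a + k)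
      have h2 : f (x (a + (k + 1) + p)) = x (a + k + p) := by
        have := hps (a + k + p)
        have he : a + (k + 1) + p = a + k + p + 1 := by omega
        rw [he]; exact this
      apply hf
      rw [h1, h2, ih]
  have hall : ∀ n, x (n + p) = x n := by
    intro n
    rcases le_or_gt a n with hn | hn
    · have h1 : a + (n - a) = n := by omega
      have := hfor (n - a)
      rw [h1] at this
      exact this.symm
    · -- n < a : pull back with iterates
      have h1 : f^[a - n] (x (n + (a - n))) = x n := ps_iter f x hps (a - n) n
      have h2 : f^[a - n] (x ((n + p) + (a - n))) = x (n + p) :=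
        ps_iter f x hps (a - n) (n + p)
      have e1 : n + (a - n) = a := by omega
      have e2 : (n + p) + (a - n) = a + p := by omega
      rw [e1] at h1
      rw [e2] at h2
      have e3 : x (a + p) = x a := by
        have := hfor 0; simpa using this.symm
      rw [e3] at h2
      rw [← h1, ← h2]
  exact hinf (range_finite_of_periodic x p hp hall)

theorem infinite_pseudostring_contains_string {Γ : Type*} (f : Γ → Γ)
    (x : ℕ → Γ) (hps : ∀ n : ℕ, f (x (n + 1)) = x n)
    (hinf : (Set.range x).Infinite) :
    (∃ m : ℕ, IsString f fun n => x (n + m)) ∧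
    (Function.Injective f → IsString f x) := by
  constructor
  · -- first part
    by_cases hF : ∃ m : ℕ, ∀ j, m < j → x j ≠ x m
    · obtain ⟨m, hm⟩ := hF
      -- no forward collisions from any index ≥ m
      have claim : ∀ n, m ≤ n → ∀ j, n < j → x j ≠ x n := by
        intro n hn
        induction n, hn using Nat.le_induction with
        | base => exact hm
        | succ n hn ih =>
          intro j hj heq
          obtain ⟨j', rfl⟩ : ∃ j', j = j' + 1 := ⟨j - 1, by omega⟩
          have h1 : x j' = x n := by
            rw [← hps j', ← hps n, heq]
          exact ih j' (by omega) h1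
      refine ⟨m, ?_, fun n => ?_⟩
      · intro a b hab
        simp only at hab
        rcases lt_trichotomy a b with h | h | h
        · exact absurd hab.symm (claim (a + m) (by omega) (b + m) (by omega))
        · exact h
        · exact absurd hab (claim (b + m) (by omega) (a + m) (by omega))
      · show f (x (n + 1 + m)) = x (n + m)
        have := hps (n + m)
        have he : n + 1 + m = n + m + 1 := by omega
        rw [he]; exact this
    · exfalso
      push_neg at hF
      -- every index collides with a later one
      obtain ⟨j, hj0, hjx⟩ := hF 0
      have hrec : ∀ n : ℕ, ∃ k, n ≤ k ∧ x k = x 0 := by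
        intro n
        induction n with
        | zero => exact ⟨0, le_refl 0, rfl⟩
        | succ n ih =>
          obtain ⟨k, hk, he⟩ := ih
          obtain ⟨l, hl, hle⟩ := hF k
          exact ⟨l, by omega, hle.trans he⟩
      have hper : f^[j] (x 0) = x 0 := by
        have := ps_iter f x hps j 0
        rw [Nat.zero_add] at this
        rw [hjx] at this
        exact this
      set y : ℕ → Γ := fun t => f^[t] (x 0) with hy
      have hyper : ∀ t, y (t + j) = y t := by
        intro t
        show f^[t + j] (x 0) = f^[t] (x 0)
        rw [Function.iterate_add_apply, hper]
      have yfin : (Set.range y).Finite := range_finite_of_periodic y j hj0 hyper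
      have hsub : Set.range x ⊆ Set.range y := by
        rintro _ ⟨n, rfl⟩
        obtain ⟨k, hk, he⟩ := hrec n
        have h1 : f^[k - n] (x (n + (k - n))) = x n := ps_iter f x hps (k - n) n
        have e1 : n + (k - n) = k := by omega
        rw [e1, he] at h1
        exact ⟨k - n, h1⟩
      exact hinf (yfin.subset hsub)
  · intro hf
    refine ⟨?_, hps⟩
    intro a b heq
    by_contra hne
    rcases lt_or_gt_of_ne hne with h | h
    · exact ps_inj_collision f x hps hinf hf h heq
    · exact ps_inj_collision f x hps hinf hf h heq.symm
end

section
/- Proposition: Let G be an abelian group, φ an injective endomorphism of G, and S = (x_n)_{n∈ℕ} a string of φ. Then at least one of the following holds: (i) the garland sequences S_k = (x_n + x_{n+k})_{n∈ℕ}, for integers k ≥ 1, are pairwise disjoint strings of φ; or (ii) there exists a sequence (a_k)_{k∈ℕ} of pairwise distinct natural numbers such that the sequences a_k·S = (a_k x_n)_{n∈ℕ} are pairwise disjoint strings of φ. -/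
section Aux

variable {G : Type*} [AddCommGroup G] (φ : G →+ G)

/-- Two backward `φ`-orbits that agree somewhere agree everywhere. -/
private lemma string_ext (hφ : Function.Injective φ) (A B : ℕ → G)
    (hA : ∀ n, φ (A (n + 1)) = A n) (hB : ∀ n, φ (B (n + 1)) = B n)
    (i : ℕ) (h : A i = B i) : ∀ n, A n = B n := by
  have up : ∀ n, A n = B n → A (n + 1) = B (n + 1) := fun n h => hφ (by rw [hA, hB, h])
  have dn : ∀ n, A (n + 1) = B (n + 1) → A n = B n := fun n h => by rw [← hA, ← hB, h]
  have upj : ∀ j, A (i + j) = B (i + j) := by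
    intro j
    induction j with
    | zero => simpa using h
    | succ j ih => exact up _ ih
  have dnj : ∀ j, A (i - j) = B (i - j) := by
    intro j
    induction j with
    | zero => simpa using h
    | succ j ih =>
      rcases Nat.eq_zero_or_pos (i - j) with h0 | h0
      · have he : i - (j + 1) = i - j := by omega
        rw [he]; exact ih
      · obtain ⟨m, hm⟩ : ∃ m, i - j = m + 1 := ⟨i - j - 1, by omega⟩
        have he : i - (j + 1) = m := by omega
        rw [he]
        exact dn m (hm ▸ ih)
  intro n
  rcases le_or_gt n i with hni | hni
  · have : i - (i - n) = n := by omega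
    have := dnj (i - n)
    rwa [show i - (i - n) = n from by omega] at this
  · have := upj (n - i)
    rwa [show i + (n - i) = n from by omega] at this

private lemma lemA' (hφ : Function.Injective φ) (x : ℕ → G) (hx : IsString (⇑φ) x)
    {i j p' r' : ℕ} (hp' : 1 ≤ p') (hr' : 1 ≤ r') (hij : i ≤ j)
    (hne : (i, p') ≠ (j, r')) (heq : x i + x (i + p') = x j + x (j + r')) :
    ∃ p q r : ℕ, 1 ≤ p ∧ 1 ≤ q ∧ q < r ∧ p ≠ q ∧ p ≠ r ∧
      ∀ n, x n + x (n + p) = x (n + q) + x (n + r) := by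
  obtain ⟨d, rfl⟩ : ∃ d, j = i + d := ⟨j - i, by omega⟩
  rcases Nat.eq_zero_or_pos d with rfl | hd
  · rw [add_zero] at heq hne
    have h1 : x (i + p') = x (i + r') := add_left_cancel heq
    have h2 := hx.1 h1
    have : p' = r' := by omega
    exact absurd (by rw [this]) hne
  · have heq2 : x i + x (i + p') = x (i + d) + x (i + (d + r')) := by
      rwa [← add_assoc]
    refine ⟨p', d, d + r', hp', hd, by omega, ?_, ?_, ?_⟩
    · intro hpd
      rw [hpd] at heq2
      rw [add_comm (x (i + d)) (x (i + (d + r')))] at heq2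
      have h1 : x i = x (i + (d + r')) := add_right_cancel heq2
      have := hx.1 h1
      omega
    · intro hpr'
      rw [hpr'] at heq2
      have h1 : x i = x (i + d) := add_right_cancel heq2
      have := hx.1 h1
      omega
    · exact string_ext φ hφ (fun n => x n + x (n + p'))
        (fun n => x (n + d) + x (n + (d + r')))
        (fun n => by
          rw [map_add, hx.2, add_right_comm n 1 p', hx.2])
        (fun n => by
          rw [map_add, add_right_comm n 1 d, hx.2, add_right_comm n 1 (d + r'), hx.2])
        i heq2

private lemma lemA (hφ : Function.Injective φ) (x : ℕ → G) (hx : IsString (⇑φ) x)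
    (i j p' r' : ℕ) (hp' : 1 ≤ p') (hr' : 1 ≤ r')
    (hne : (i, p') ≠ (j, r')) (heq : x i + x (i + p') = x j + x (j + r')) :
    ∃ p q r : ℕ, 1 ≤ p ∧ 1 ≤ q ∧ q < r ∧ p ≠ q ∧ p ≠ r ∧
      ∀ n, x n + x (n + p) = x (n + q) + x (n + r) := by
  rcases le_total i j with hij | hij
  · exact lemA' φ hφ x hx hp' hr' hij hne heq
  · exact lemA' φ hφ x hx hr' hp' hij (Ne.symm hne) heq.symm

private lemma fan_of_rel (hφ : Function.Injective φ) (x : ℕ → G) (hx : IsString (⇑φ) x)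
    (p q r : ℕ) (hp : 1 ≤ p) (hq : 1 ≤ q) (hqr : q < r) (hpq : p ≠ q) (hpr : p ≠ r)
    (hrel : ∀ n, x n + x (n + p) = x (n + q) + x (n + r)) :
    (∃ a : ℕ → ℕ, Function.Injective a ∧
      (∀ k : ℕ, IsString (⇑φ) (fun n => a k • x n)) ∧
      Pairwise fun k l =>
        Disjoint (Set.range fun n => a k • x n) (Set.range fun n => a l • x n)) := by
  classical
  set M := max p r with hM
  set T : Submodule ℤ G := Submodule.span ℤ (x '' Set.Icc 1 M) with hT
  have hTfg : T.FG := Submodule.fg_span ((Set.finite_Icc 1 M).image x)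
  have hgen : ∀ i, 1 ≤ i → i ≤ M → x i ∈ T := fun i h1 h2 =>
    Submodule.subset_span ⟨i, ⟨h1, h2⟩, rfl⟩
  have hmem : ∀ n, x n ∈ T := by
    intro n
    induction n using Nat.strong_induction_on with
    | _ n ih =>
      rcases Nat.eq_zero_or_pos n with rfl | hn
      · have h0 := hrel 0
        simp only [zero_add] at h0
        have hx0 : x 0 = x q + x r - x p := by
          rw [eq_sub_iff_add_eq]; exact h0
        rw [hx0]
        exact sub_mem
          (add_mem (hgen q hq (by omega)) (hgen r (by omega) (le_max_right p r)))
          (hgen p hp (le_max_left p r))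
      · rcases le_or_gt n M with hnM | hnM
        · exact hgen n hn hnM
        · rcases lt_or_gt_of_ne hpr with hplt | hpgt
          · -- p < r, so M = r
            have hMr : M = r := by omega
            obtain ⟨c, rfl⟩ : ∃ c, n = c + r := ⟨n - r, by omega⟩
            have hc1 : 1 ≤ c := by omega
            have h := hrel c
            have hxn : x (c + r) = x c + x (c + p) - x (c + q) := by
              rw [eq_sub_iff_add_eq, add_comm]
              exact h.symm
            rw [hxn]
            exact sub_mem (add_mem (ih c (by omega)) (ih (c + p) (by omega)))
              (ih (c + q) (by omega))
          · -- r < p, so M = p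
            have hMp : M = p := by omega
            obtain ⟨c, rfl⟩ : ∃ c, n = c + p := ⟨n - p, by omega⟩
            have hc1 : 1 ≤ c := by omega
            have h := hrel c
            have hxn : x (c + p) = x (c + q) + x (c + r) - x c := by
              rw [eq_sub_iff_add_eq, add_comm (x (c + p)) (x c)]
              exact h
            rw [hxn]
            exact sub_mem (add_mem (ih (c + q) (by omega)) (ih (c + r) (by omega)))
              (ih c (by omega))
  haveI hNoeth : IsNoetherian ℤ ↥T := isNoetherian_of_fg_of_noetherian T hTfg
  -- key finiteness contradiction
  have hC : ∀ e : ℕ, 0 < e → ∀ y : ℕ → G, (∀ j, y j ∈ T) → Function.Injective y →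
      (∀ j, e • y j = 0) → False := by
    intro e he y hyT hyInj hkill
    set U : Submodule ℤ ↥T := Submodule.torsionBy ℤ ↥T (e : ℤ) with hU
    haveI : Module.Finite ℤ ↥U := Module.Finite.iff_fg.mpr (IsNoetherian.noetherian U)
    haveI : AddGroup.FG ↥U := Module.Finite.iff_addGroup_fg.mp inferInstance
    have htor : AddMonoid.IsTorsion ↥U := by
      intro u
      rw [isOfFinAddOrder_iff_nsmul_eq_zero]
      refine ⟨e, he, ?_⟩
      have hu := u.2
      rw [Submodule.mem_torsionBy_iff] at hu
      have h1 : ((e : ℤ) • u : ↥U) = 0 := by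
        apply Subtype.ext
        rw [Submodule.coe_smul]
        exact hu
      rw [← natCast_zsmul]
      exact h1
    haveI : Finite ↥U := AddCommGroup.finite_of_fg_torsion ↥U htor
    have hymem : ∀ j, (⟨y j, hyT j⟩ : ↥T) ∈ U := by
      intro j
      rw [Submodule.mem_torsionBy_iff]
      apply Subtype.ext
      rw [Submodule.coe_smul]
      show (e : ℤ) • y j = 0
      rw [natCast_zsmul]
      exact hkill j
    let f : ℕ → ↥U := fun j => ⟨⟨y j, hyT j⟩, hymem j⟩
    obtain ⟨j, j', hjj, hfeq⟩ := Finite.exists_ne_map_eq_of_infinite f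
    apply hjj
    apply hyInj
    have : ((f j : ↥T) : G) = ((f j' : ↥T) : G) := by rw [hfeq]
    exact this
  have hKC : ∀ e : ℕ, 0 < e → e • x 0 = 0 → False := by
    intro e he h0
    have hall : ∀ i, e • x i = 0 :=
      string_ext φ hφ (fun i => e • x i) (fun _ => 0)
        (fun n => by rw [map_nsmul, hx.2]) (fun _ => map_zero φ) 0 (by simpa using h0)
    exact hC e he x hmem hx.1 hall
  have hKCZ : ∀ N : ℤ, N ≠ 0 → N • x 0 = 0 → False := by
    intro N hN h
    apply hKC N.natAbs (Int.natAbs_pos.mpr hN)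
    rw [← natCast_zsmul]
    rcases Int.natAbs_eq N with hh | hh
    · rw [← hh]; exact h
    · have h2 : ((N.natAbs : ℤ)) = -N := by omega
      rw [h2, neg_zsmul, h, neg_zero]
  -- per-string periodicity contradiction
  have hPer : ∀ e : ℕ, 0 < e → ∀ n t : ℕ, 1 ≤ t → e • x (n + t) = e • x n → False := by
    intro e he n t ht hbase
    have hall : ∀ i, e • x (i + t) = e • x i :=
      string_ext φ hφ (fun i => e • x (i + t)) (fun i => e • x i)
        (fun i => by rw [map_nsmul, add_right_comm i 1 t, hx.2])
        (fun i => by rw [map_nsmul, hx.2]) n hbase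
    have hj0 : ∀ j : ℕ, e • x (j * t) = e • x 0 := by
      intro j
      induction j with
      | zero => rw [Nat.zero_mul]
      | succ j ih =>
        have h1 := hall (j * t)
        rw [show (j + 1) * t = j * t + t from by ring]
        rw [h1]; exact ih
    apply hC e he (fun j => x (j * t) - x 0) (fun j => sub_mem (hmem _) (hmem 0))
    · intro j j' hjj
      have h1 : x (j * t) = x (j' * t) := by
        have := sub_left_injective hjj
        exact this
      have := hx.1 h1
      exact Nat.eq_of_mul_eq_mul_right (by omega) this
    · intro j
      rw [smul_sub, hj0 j, sub_self]
  -- cross contradiction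
  have hCross : ∀ a b : ℕ, a.Prime → b.Prime → a ≠ b →
      ∀ d : ℕ, (∀ j, a • x (j + d) = b • x j) → False := by
    intro a b ha hb hab d hbase
    rcases Nat.eq_zero_or_pos d with rfl | hd
    · have h0 := hbase 0
      simp only [add_zero] at h0
      apply hKCZ ((a : ℤ) - b)
      · intro hc
        apply hab
        omega
      · rw [sub_smul, natCast_zsmul, natCast_zsmul, h0, sub_self]
    · have hiter : ∀ s j, a ^ s • x (j + s * d) = b ^ s • x j := by
        intro s
        induction s with
        | zero => intro j; simp
        | succ s ih =>
          intro j
          have h1 : j + (s + 1) * d = (j + d) + s * d := by ring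
          rw [h1]
          calc a ^ (s + 1) • x ((j + d) + s * d)
              = a • (a ^ s • x ((j + d) + s * d)) := by rw [pow_succ', mul_smul]
            _ = a • (b ^ s • x (j + d)) := by rw [ih (j + d)]
            _ = b ^ s • (a • x (j + d)) := smul_comm _ _ _
            _ = b ^ s • (b • x j) := by rw [hbase j]
            _ = b ^ (s + 1) • x j := by rw [pow_succ', mul_smul]; exact smul_comm _ _ _
      have hw : ∀ s : ℕ, ∃ w, w ∈ T ∧ ((a : ℤ) ^ s) • w = x 0 := by
        intro s
        have hcop : IsCoprime ((a : ℤ) ^ s) ((b : ℤ) ^ s) := by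
          apply IsCoprime.pow
          rw [Nat.isCoprime_iff_coprime]
          exact (Nat.coprime_primes ha hb).mpr hab
        obtain ⟨α, β, hαβ⟩ := hcop
        refine ⟨α • x 0 + β • x (s * d),
          add_mem (Submodule.smul_mem _ _ (hmem 0)) (Submodule.smul_mem _ _ (hmem _)), ?_⟩
        have hs := hiter s 0
        rw [zero_add] at hs
        have hsz : ((a : ℤ) ^ s) • x (s * d) = ((b : ℤ) ^ s) • x 0 := by
          have h2 : ((a ^ s : ℕ) : ℤ) • x (s * d) = ((b ^ s : ℕ) : ℤ) • x 0 := by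
            rw [natCast_zsmul, natCast_zsmul]; exact hs
          push_cast at h2
          exact h2
        calc ((a : ℤ) ^ s) • (α • x 0 + β • x (s * d))
            = α • (((a : ℤ) ^ s) • x 0) + β • (((a : ℤ) ^ s) • x (s * d)) := by
              rw [smul_add, smul_comm ((a : ℤ) ^ s) α, smul_comm ((a : ℤ) ^ s) β]
          _ = α • (((a : ℤ) ^ s) • x 0) + β • (((b : ℤ) ^ s) • x 0) := by rw [hsz]
          _ = (α * (a : ℤ) ^ s + β * (b : ℤ) ^ s) • x 0 := by
              rw [add_smul, mul_smul, mul_smul]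
          _ = x 0 := by rw [hαβ, one_smul]
      set W : ℕ → Submodule ℤ G := fun s =>
        T ⊓ Submodule.comap (LinearMap.lsmul ℤ G ((a : ℤ) ^ s)) (Submodule.span ℤ {x 0})
        with hW
      have hWmem : ∀ s g, g ∈ W s ↔ g ∈ T ∧ ((a : ℤ) ^ s) • g ∈ Submodule.span ℤ {x 0} := by
        intro s g
        rw [hW]
        simp only [Submodule.mem_inf, Submodule.mem_comap, LinearMap.lsmul_apply]
      have hWmono : Monotone W := by
        apply monotone_nat_of_le_succ
        intro s g hg
        rw [hWmem] at hg ⊢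
        obtain ⟨hgT, hgc⟩ := hg
        refine ⟨hgT, ?_⟩
        rw [pow_succ', mul_smul]
        exact Submodule.smul_mem _ _ hgc
      let V : ℕ →o Submodule ℤ ↥T :=
        ⟨fun s => (W s).comap T.subtype, fun s t hst => Submodule.comap_mono (hWmono hst)⟩
      obtain ⟨s₀, hs₀⟩ := monotone_stabilizes_iff_noetherian.mpr hNoeth V
      obtain ⟨w, hwT, hw1⟩ := hw (s₀ + 1)
      have hwW : w ∈ W (s₀ + 1) := by
        rw [hWmem]
        refine ⟨hwT, ?_⟩
        rw [hw1]
        exact Submodule.mem_span_singleton_self _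
      have hwW0 : w ∈ W s₀ := by
        have h1 : (⟨w, hwT⟩ : ↥T) ∈ V (s₀ + 1) := hwW
        rw [← hs₀ (s₀ + 1) (Nat.le_succ _)] at h1
        exact h1
      rw [hWmem] at hwW0
      obtain ⟨-, hw2⟩ := hwW0
      rw [Submodule.mem_span_singleton] at hw2
      obtain ⟨c, hc⟩ := hw2
      have hx0 : x 0 = ((a : ℤ) * c) • x 0 := by
        calc x 0 = ((a : ℤ) ^ (s₀ + 1)) • w := hw1.symm
          _ = (a : ℤ) • (((a : ℤ) ^ s₀) • w) := by rw [pow_succ', mul_smul]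
          _ = (a : ℤ) • (c • x 0) := by rw [← hc]
          _ = ((a : ℤ) * c) • x 0 := (mul_smul _ _ _).symm
      apply hKCZ (1 - (a : ℤ) * c)
      · intro h0
        have h1 : (a : ℤ) * c = 1 := by omega
        have h2 : (a : ℤ) ∣ 1 := ⟨c, h1.symm⟩
        have h3 := Int.le_of_dvd one_pos h2
        have h4 : (2 : ℤ) ≤ (a : ℤ) := by exact_mod_cast ha.two_le
        omega
      · rw [sub_smul, one_smul, ← hx0, sub_self]
  -- build the fan
  refine ⟨fun k => Nat.nth Nat.Prime k, Nat.nth_injective Nat.infinite_setOf_prime, ?_, ?_⟩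
  · intro k
    constructor
    · intro n m hnm
      simp only at hnm
      by_contra hne
      have hpos : 0 < Nat.nth Nat.Prime k := (Nat.prime_nth_prime k).pos
      rcases lt_or_gt_of_ne hne with h | h
      · obtain ⟨t, ht, rfl⟩ : ∃ t, 1 ≤ t ∧ m = n + t := ⟨m - n, by omega, by omega⟩
        exact hPer _ hpos n t ht hnm.symm
      · obtain ⟨t, ht, rfl⟩ : ∃ t, 1 ≤ t ∧ n = m + t := ⟨n - m, by omega, by omega⟩
        exact hPer _ hpos m t ht hnm
    · intro n
      simp only
      rw [map_nsmul, hx.2]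
  · intro k l hkl
    rw [Set.disjoint_left]
    rintro z ⟨n, hn⟩ ⟨m, hm⟩
    simp only at hn hm
    have heq : Nat.nth Nat.Prime k • x n = Nat.nth Nat.Prime l • x m := by rw [hn, hm]
    have hnth : Nat.nth Nat.Prime k ≠ Nat.nth Nat.Prime l :=
      fun hh => hkl (Nat.nth_injective Nat.infinite_setOf_prime hh)
    rcases le_total m n with h | h
    · obtain ⟨d, rfl⟩ : ∃ d, n = m + d := ⟨n - m, by omega⟩
      refine hCross _ _ (Nat.prime_nth_prime k) (Nat.prime_nth_prime l) hnth d ?_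
      exact string_ext φ hφ (fun j => Nat.nth Nat.Prime k • x (j + d))
        (fun j => Nat.nth Nat.Prime l • x j)
        (fun i => by rw [map_nsmul, add_right_comm i 1 d, hx.2])
        (fun i => by rw [map_nsmul, hx.2]) m heq
    · obtain ⟨d, rfl⟩ : ∃ d, m = n + d := ⟨m - n, by omega⟩
      refine hCross _ _ (Nat.prime_nth_prime l) (Nat.prime_nth_prime k) hnth.symm d ?_
      exact string_ext φ hφ (fun j => Nat.nth Nat.Prime l • x (j + d))
        (fun j => Nat.nth Nat.Prime k • x j)
        (fun i => by rw [map_nsmul, add_right_comm i 1 d, hx.2])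
        (fun i => by rw [map_nsmul, hx.2]) n heq.symm

end Aux

theorem garland_or_fan {G : Type*} [AddCommGroup G] (φ : G →+ G)
    (hφ : Function.Injective φ) (x : ℕ → G) (hx : IsString (⇑φ) x) :
    ((∀ k : ℕ, 1 ≤ k → IsString (⇑φ) (fun n => x n + x (n + k))) ∧
      (∀ k l : ℕ, 1 ≤ k → 1 ≤ l → k ≠ l →
        Disjoint (Set.range fun n => x n + x (n + k))
          (Set.range fun n => x n + x (n + l)))) ∨
    (∃ a : ℕ → ℕ, Function.Injective a ∧
      (∀ k : ℕ, IsString (⇑φ) (fun n => a k • x n)) ∧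
      Pairwise fun k l =>
        Disjoint (Set.range fun n => a k • x n) (Set.range fun n => a l • x n)) := by
  by_cases H : ((∀ k : ℕ, 1 ≤ k → IsString (⇑φ) (fun n => x n + x (n + k))) ∧
      (∀ k l : ℕ, 1 ≤ k → 1 ≤ l → k ≠ l →
        Disjoint (Set.range fun n => x n + x (n + k))
          (Set.range fun n => x n + x (n + l))))
  · exact Or.inl H
  · refine Or.inr ?_
    have hrel : ∃ p q r : ℕ, 1 ≤ p ∧ 1 ≤ q ∧ q < r ∧ p ≠ q ∧ p ≠ r ∧
        ∀ n, x n + x (n + p) = x (n + q) + x (n + r) := by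
      rw [not_and_or] at H
      rcases H with H | H
      · push_neg at H
        obtain ⟨k, hk, hks⟩ := H
        have h2 : ∀ n : ℕ, φ ((fun n => x n + x (n + k)) (n + 1)) =
            (fun n => x n + x (n + k)) n := by
          intro n
          simp only
          rw [map_add, hx.2, add_right_comm n 1 k, hx.2]
        have hni : ¬ Function.Injective (fun n => x n + x (n + k)) :=
          fun hi => hks ⟨hi, h2⟩
        rw [Function.not_injective_iff] at hni
        obtain ⟨n, m, hnm, hne⟩ := hni
        exact lemA φ hφ x hx n m k k hk hk
          (by simp only [ne_eq, Prod.mk.injEq, not_and]; intro h; exact absurd h hne)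
          hnm
      · push_neg at H
        obtain ⟨k, l, hk, hl, hkl, hnd⟩ := H
        rw [Set.not_disjoint_iff] at hnd
        obtain ⟨z, ⟨n, hn⟩, ⟨m, hm⟩⟩ := hnd
        simp only at hn hm
        refine lemA φ hφ x hx n m k l hk hl ?_ (by rw [hn, hm])
        simp only [ne_eq, Prod.mk.injEq, not_and]
        intro _ h
        exact hkl h
    obtain ⟨p, q, r, hp, hq, hqr, hpq, hpr, hrelr⟩ := hrel
    exact fan_of_rel φ hφ x hx p q r hp hq hqr hpq hpr hrelr
end

section
/- Proposition: Let G be an abelian group, φ an injective endomorphism of G, and S = (x_n)_{n∈ℕ} a string of φ. If there exist positive integers k < h such that x_h ∈ x_0 + ⟨x_1, …, x_k⟩ or x_h ∈ −x_0 + ⟨x_1, …, x_k⟩ (where ⟨x_1, …, x_k⟩ is the subgroup generated by x_1, …, x_k), then there exists a sequence (a_j)_{j∈ℕ} of pairwise distinct integers such that the sequences a_j·S = (a_j x_n)_{n∈ℕ} are pairwise disjoint strings of φ. -/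
section Aux

variable {G : Type*} [AddCommGroup G]

/-- Every element of the span satisfies a submodule-predicate that holds on generators. -/
lemma span_subtype_forall {s : Set G} (K : Submodule ℤ ↥(Submodule.span ℤ s))
    (hgen : ∀ g : G, (hg : g ∈ s) →
      (⟨g, Submodule.subset_span hg⟩ : ↥(Submodule.span ℤ s)) ∈ K) :
    ∀ v : ↥(Submodule.span ℤ s), v ∈ K := by
  have h1 : Submodule.span ℤ s ≤ Submodule.map (Submodule.span ℤ s).subtype K :=
    Submodule.span_le.mpr fun g hg => ⟨⟨g, Submodule.subset_span hg⟩, hgen g hg, rfl⟩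
  rintro ⟨g, hg⟩
  obtain ⟨y, hyK, hval⟩ := h1 hg
  have hy : y = (⟨g, hg⟩ : ↥(Submodule.span ℤ s)) := Subtype.ext hval
  rwa [hy] at hyK

/-- Pushing an equation `c • x (p+n) = e • x (q+n)` down a string `n` times. -/
lemma string_down (φ : G →+ G) (x : ℕ → G) (hstr : ∀ n, φ (x (n + 1)) = x n) :
    ∀ (n : ℕ) (c e : ℤ) (p q : ℕ), c • x (p + n) = e • x (q + n) → c • x p = e • x q := by
  intro n
  induction n with
  | zero => intro c e p q hh; simpa using hh
  | succ n ih =>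
    intro c e p q hh
    apply ih c e p q
    have := congrArg φ hh
    rw [show p + (n + 1) = (p + n) + 1 from rfl, show q + (n + 1) = (q + n) + 1 from rfl] at this
    simpa [map_zsmul, hstr] using this

set_option maxHeartbeats 1000000 in
/-- The core lemma. -/
lemma core_lemma (φ : G →+ G) (hφ : Function.Injective φ) (x : ℕ → G)
    (hinj : Function.Injective x) (hstr : ∀ n, φ (x (n + 1)) = x n)
    (k h : ℕ) (hk : 0 < k) (hkh : k < h) (ε : ℤ) (hε : ε = 1 ∨ ε = -1)
    (d : ℕ → ℤ) (hrel : x h = ε • x 0 + ∑ i ∈ Finset.Icc 1 k, d i • x i) :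
    ∀ (t : ℕ) (a b : ℤ), a ≠ 0 → a • x 0 = b • x t → a = b ∧ t = 0 := by
  -- pushing an equation up a string
  have hup : ∀ (c : ℤ), c • x 0 = 0 → ∀ n, c • x n = 0 := by
    intro c hc n
    induction n with
    | zero => exact hc
    | succ n ih => exact hφ (by simpa [map_zsmul, hstr n] using ih)
  -- shifted relation
  have hrelε : ∀ n, x (n + h) = ε • x n + ∑ i ∈ Finset.Icc 1 k, d i • x (i + n) := by
    intro n
    induction n with
    | zero => simpa using hrel
    | succ n ih =>
      apply hφ
      have l1 : φ (x (n + 1 + h)) = x (n + h) := by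
        rw [show n + 1 + h = (n + h) + 1 by omega]; exact hstr _
      have l2 : φ (ε • x (n + 1) + ∑ i ∈ Finset.Icc 1 k, d i • x (i + (n + 1)))
          = ε • x n + ∑ i ∈ Finset.Icc 1 k, d i • x (i + n) := by
        rw [map_add, map_zsmul, hstr n, map_sum]
        congr 1
        refine Finset.sum_congr rfl fun i _ => ?_
        rw [map_zsmul, show i + (n + 1) = (i + n) + 1 from rfl, hstr]
      rw [l1, l2, ih]
  -- the subgroup generated by the string
  set H : Submodule ℤ G := Submodule.span ℤ (x '' Set.Icc 1 h) with hH
  have hgen : ∀ i, 1 ≤ i → i ≤ h → x i ∈ H := fun i h1 h2 =>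
    Submodule.subset_span ⟨i, ⟨h1, h2⟩, rfl⟩
  have hx0 : x 0 ∈ H := by
    have hsum : ∑ i ∈ Finset.Icc 1 k, d i • x i ∈ H :=
      Submodule.sum_mem _ fun i hi => Submodule.smul_mem _ _
        (hgen i (Finset.mem_Icc.mp hi).1 (le_trans (Finset.mem_Icc.mp hi).2 hkh.le))
    have hdiff : x h - ∑ i ∈ Finset.Icc 1 k, d i • x i ∈ H :=
      Submodule.sub_mem _ (hgen h (by omega) le_rfl) hsum
    have h0 := hrelε 0
    simp only [Nat.zero_add, Nat.add_zero] at h0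
    rcases hε with rfl | rfl
    · have : x 0 = x h - ∑ i ∈ Finset.Icc 1 k, d i • x i := by
        rw [h0]; simp
      rw [this]; exact hdiff
    · have : x 0 = -(x h - ∑ i ∈ Finset.Icc 1 k, d i • x i) := by
        rw [h0]; simp
      rw [this]; exact Submodule.neg_mem _ hdiff
  have hmem : ∀ n, x n ∈ H := by
    intro n
    induction n using Nat.strong_induction_on with
    | _ n IH =>
      rcases Nat.lt_or_ge n 1 with h1 | h1
      · have : n = 0 := by omega
        subst this; exact hx0
      rcases le_or_gt n h with h2 | h2
      · exact hgen n h1 h2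
      · rw [show n = (n - h) + h by omega, hrelε (n - h)]
        refine Submodule.add_mem _ (Submodule.smul_mem _ _ (IH _ (by omega)))
          (Submodule.sum_mem _ fun i hi => Submodule.smul_mem _ _ (IH _ ?_))
        have := Finset.mem_Icc.mp hi; omega
  haveI : Module.Finite ℤ ↥H :=
    hH ▸ Module.Finite.span_of_finite ℤ ((Set.finite_Icc 1 h).image x)
  -- φ restricts to H
  have hmaps : ∀ g ∈ H, φ.toIntLinearMap g ∈ H := by
    have hle : H ≤ Submodule.comap φ.toIntLinearMap H := by
      rw [hH, Submodule.span_le]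
      rintro _ ⟨i, ⟨hi1, _⟩, rfl⟩
      simp only [Set.mem_preimage, SetLike.mem_coe, Submodule.mem_comap,
        AddMonoidHom.coe_toIntLinearMap]
      obtain ⟨j, rfl⟩ : ∃ j, i = j + 1 := ⟨i - 1, by omega⟩
      rw [hstr j]; exact hmem j
    exact fun g hg => hle hg
  set ψ : ↥H →ₗ[ℤ] ↥H := φ.toIntLinearMap.restrict hmaps with hψ
  have hψval : ∀ (g : G) (hg : g ∈ H), ((ψ ⟨g, hg⟩ : ↥H) : G) = φ g := fun g hg => rfl
  have hψinj : Function.Injective ψ := by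
    intro u v huv
    exact Subtype.ext (hφ (by
      have := congrArg (Subtype.val) huv
      rwa [hψval, hψval] at this))
  have hψsurj : Function.Surjective ψ := by
    have hall : ∀ v : ↥H, v ∈ LinearMap.range ψ := by
      refine span_subtype_forall (s := x '' Set.Icc 1 h) _ fun g hg => ?_
      obtain ⟨i, _, rfl⟩ := hg
      refine ⟨⟨x (i + 1), hmem (i + 1)⟩, Subtype.ext ?_⟩
      rw [hψval]
      exact hstr i
    intro v
    exact hall v
  set e : ↥H ≃ₗ[ℤ] ↥H := LinearEquiv.ofBijective ψ ⟨hψinj, hψsurj⟩ with he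
  -- torsion
  set T : Submodule ℤ ↥H := Submodule.torsion ℤ ↥H with hT
  haveI hTfin : Finite ↥T := by
    haveI : Module.Finite ℤ ↥T := Module.Finite.iff_fg.mpr (IsNoetherian.noetherian T)
    exact Module.finite_of_fg_torsion ↥T (Submodule.torsion_isTorsion)
  have hTsetfin : (T : Set ↥H).Finite := Set.toFinite _
  have hfinish : ∀ F : Set G, F.Finite → (∀ n, x n ∈ F) → False := by
    intro F hF hsub
    exact (Set.infinite_range_of_injective hinj)
      (hF.subset (by rintro _ ⟨n, rfl⟩; exact hsub n))
  have htorsFalse : ∀ c : ℤ, c ≠ 0 → c • x 0 = 0 → False := by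
    intro c hc h0
    have hTn : ∀ n, (⟨x n, hmem n⟩ : ↥H) ∈ T := by
      intro n
      rw [hT, Submodule.mem_torsion_iff]
      refine ⟨⟨c, mem_nonZeroDivisors_of_ne_zero hc⟩, ?_⟩
      show c • (⟨x n, hmem n⟩ : ↥H) = 0
      exact Subtype.ext (by simpa using hup c h0 n)
    exact hfinish (Subtype.val '' (T : Set ↥H)) (hTsetfin.image _) fun n => ⟨_, hTn n, rfl⟩
  -- torsion-free quotient
  set π : ↥H →ₗ[ℤ] (↥H ⧸ T) := T.mkQ with hπ
  set vseq : ℕ → (↥H ⧸ T) := fun n => π ⟨x n, hmem n⟩ with hvseq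
  haveI : Module.Finite ℤ (↥H ⧸ T) := Module.Finite.of_surjective π (Submodule.mkQ_surjective T)
  haveI : Module.IsTorsionFree ℤ (↥H ⧸ T) := hT ▸ Submodule.QuotientTorsion.instIsTorsionFree
  haveI : Module.Free ℤ (↥H ⧸ T) := by
    exact Module.free_of_finite_type_torsion_free'
  -- the induced automorphism of the quotient
  have hmapT : T.map (e : ↥H →ₗ[ℤ] ↥H) = T := by
    apply le_antisymm
    · rintro _ ⟨u, hu, rfl⟩
      obtain ⟨⟨c, hc⟩, hcu⟩ := (Submodule.mem_torsion_iff u).mp hu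
      have hcu' : c • u = 0 := hcu
      refine (Submodule.mem_torsion_iff _).mpr ⟨⟨c, hc⟩, ?_⟩
      show c • e u = 0
      rw [← map_zsmul e c u, hcu', map_zero]
    · intro u hu
      obtain ⟨⟨c, hc⟩, hcu⟩ := (Submodule.mem_torsion_iff u).mp hu
      have hcu' : c • u = 0 := hcu
      refine ⟨e.symm u, ?_, e.apply_symm_apply u⟩
      refine (Submodule.mem_torsion_iff _).mpr ⟨⟨c, hc⟩, ?_⟩
      show c • e.symm u = 0
      rw [← map_zsmul e.symm c u, hcu', map_zero]
  set M : (↥H ⧸ T) ≃ₗ[ℤ] (↥H ⧸ T) := Submodule.Quotient.equiv T T e hmapT with hM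
  have hMapp : ∀ u : ↥H, M (π u) = π (e u) := by
    intro u
    rw [hM, hπ]
    simp [Submodule.Quotient.equiv, Submodule.mkQ_apply, Submodule.mapQ_apply]
  have hMv : ∀ n, M (vseq (n + 1)) = vseq n := by
    intro n
    rw [hvseq]
    dsimp only
    rw [hMapp]
    congr 1
    refine Subtype.ext ?_
    show ((e ⟨x (n + 1), hmem (n + 1)⟩ : ↥H) : G) = x n
    rw [he]
    show ((ψ ⟨x (n + 1), hmem (n + 1)⟩ : ↥H) : G) = x n
    rw [hψval]
    exact hstr n
  have hMs : ∀ (s n : ℕ), (M ^ s) (vseq (n + s)) = vseq n := by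
    intro s
    induction s with
    | zero => intro n; simp
    | succ s ih =>
      intro n
      rw [LinearEquiv.pow_apply, Function.iterate_succ_apply,
        show n + (s + 1) = (n + 1) + s from by omega]
      have := hMv n
      calc M^[s] (M (vseq (n + 1 + s)))
          = M^[s] ((M ^ 1) (vseq ((n + s) + 1))) := by
            rw [pow_one, show n + 1 + s = (n + s) + 1 from by omega]
        _ = M^[s] (vseq (n + s)) := by rw [pow_one, hMv]
        _ = (M ^ s) (vseq (n + s)) := (LinearEquiv.pow_apply M s _).symm
        _ = vseq n := ih n
  -- main argument
  intro t a b ha hab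
  have hb : b ≠ 0 := by
    rintro rfl
    exact absurd (by simpa using hab) fun hh => htorsFalse a ha hh
  rcases Nat.eq_zero_or_pos t with rfl | ht
  · refine ⟨?_, rfl⟩
    by_contra hne
    refine htorsFalse (a - b) (sub_ne_zero.mpr hne) ?_
    rw [sub_smul, hab, sub_self]
  · exfalso
    -- propagate the relation up the string
    have h1 : ∀ n, a • x n = b • x (t + n) := by
      intro n
      induction n with
      | zero => simpa using hab
      | succ n ih =>
        apply hφ
        rw [map_zsmul, map_zsmul, hstr n, show t + (n + 1) = (t + n) + 1 from rfl,
          hstr (t + n)]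
        exact ih
    have h2 : ∀ n, a • vseq n = b • vseq (t + n) := by
      intro n
      have hsub : (a • (⟨x n, hmem n⟩ : ↥H)) = b • (⟨x (t + n), hmem (t + n)⟩ : ↥H) :=
        Subtype.ext (by simpa using h1 n)
      have := congrArg π hsub
      rw [map_zsmul, map_zsmul] at this
      exact this
    set Mt : (↥H ⧸ T) ≃ₗ[ℤ] (↥H ⧸ T) := M ^ t with hMtdef
    have hMts : ∀ n, Mt (vseq (n + t)) = vseq n := fun n => hMs t n
    have h3 : ∀ n, a • (Mt (vseq n)) = b • vseq n := by
      intro n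
      have e1 : Mt (vseq (t + n)) = vseq n := by
        rw [show t + n = n + t from by omega]; exact hMts n
      have := congrArg Mt (h2 n)
      rw [map_zsmul, map_zsmul, e1] at this
      exact this
    have h4 : ∀ w : (↥H ⧸ T), a • (Mt w) = b • w := by
      set L : (↥H ⧸ T) →ₗ[ℤ] (↥H ⧸ T) :=
        a • (Mt : (↥H ⧸ T) →ₗ[ℤ] (↥H ⧸ T)) - b • LinearMap.id with hL
      have hLv : ∀ n, L (vseq n) = 0 := by
        intro n
        rw [hL]
        simp only [LinearMap.sub_apply, LinearMap.smul_apply, LinearMap.id_apply,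
          LinearEquiv.coe_coe]
        rw [sub_eq_zero]
        exact h3 n
      have hker : ∀ u : ↥H, u ∈ LinearMap.ker (L ∘ₗ π) := by
        refine span_subtype_forall (s := x '' Set.Icc 1 h) _ fun g hg => ?_
        obtain ⟨i, _, rfl⟩ := hg
        refine LinearMap.mem_ker.mpr ?_
        show L (π ⟨x i, _⟩) = 0
        exact hLv i
      intro w
      obtain ⟨u, rfl⟩ := Submodule.mkQ_surjective T w
      have hu := hker u
      rw [LinearMap.mem_ker, LinearMap.comp_apply] at hu
      rw [hL] at hu
      simp only [LinearMap.sub_apply, LinearMap.smul_apply, LinearMap.id_apply,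
        LinearEquiv.coe_coe] at hu
      rw [sub_eq_zero] at hu
      exact hu
    -- V is nontrivial
    have hv0 : vseq 0 ≠ 0 := by
      intro h0
      have hmemT : (⟨x 0, hmem 0⟩ : ↥H) ∈ T := by
        have h0' : T.mkQ ⟨x 0, hmem 0⟩ = 0 := h0
        have := LinearMap.mem_ker.mpr h0'
        rwa [Submodule.ker_mkQ] at this
      obtain ⟨⟨c, hc⟩, hcu⟩ := (Submodule.mem_torsion_iff _).mp hmemT
      have hcu' : c • (⟨x 0, hmem 0⟩ : ↥H) = 0 := hcu
      refine htorsFalse c (nonZeroDivisors.ne_zero hc) ?_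
      have := congrArg Subtype.val hcu'
      simpa using this
    haveI : Nontrivial (↥H ⧸ T) := nontrivial_of_ne _ _ hv0
    set B := Module.Free.chooseBasis ℤ (↥H ⧸ T) with hB
    haveI := B.index_nonempty
    set i0 : Module.Free.ChooseBasisIndex ℤ (↥H ⧸ T) := Classical.arbitrary _ with hi0
    have hadvd : a ∣ b := by
      refine ⟨B.repr (Mt (B i0)) i0, ?_⟩
      have h5 := congrArg (fun v : (↥H ⧸ T) => B.repr v i0) (h4 (B i0))
      rw [map_zsmul, map_zsmul, Finsupp.smul_apply, Finsupp.smul_apply,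
        Module.Basis.repr_self, Finsupp.single_eq_same, smul_eq_mul, smul_eq_mul,
        mul_one] at h5
      exact h5.symm
    have hbdvd : b ∣ a := by
      refine ⟨B.repr (Mt.symm (B i0)) i0, ?_⟩
      have h5 := h4 (Mt.symm (B i0))
      rw [LinearEquiv.apply_symm_apply] at h5
      have h6 := congrArg (fun v : (↥H ⧸ T) => B.repr v i0) h5
      rw [map_zsmul, map_zsmul, Finsupp.smul_apply, Finsupp.smul_apply,
        Module.Basis.repr_self, Finsupp.single_eq_same, smul_eq_mul, smul_eq_mul,
        mul_one] at h6
      exact h6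
    have hab' : a = b ∨ a = -b := Int.associated_iff.mp (associated_of_dvd_dvd hadvd hbdvd)
    -- M^t squares to the identity
    have hsq : ∀ w : (↥H ⧸ T), Mt (Mt w) = w := by
      rcases hab' with rfl | hneg
      · intro w
        have := h4 w
        have hw : Mt w = w := smul_right_injective _ ha this
        rw [hw, hw]
      · subst hneg
        intro w
        have hminus : ∀ w : (↥H ⧸ T), Mt w = -w := by
          intro w
          have h5 := h4 w
          have hz : (-b) • (Mt w - (-w)) = 0 := by
            rw [smul_sub, h5]
            simp
          have h6 : Mt w - (-w) = 0 :=
            smul_right_injective _ (neg_ne_zero.mpr hb) (by simpa using hz)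
          rw [sub_eq_zero] at h6
          exact h6
        rw [hminus, hminus, neg_neg]
    have hper2 : ∀ n, vseq (n + 2 * t) = vseq n := by
      intro n
      have e1 : Mt (vseq (n + 2 * t)) = vseq (n + t) := by
        have := hMts (n + t)
        rwa [show n + t + t = n + 2 * t from by omega] at this
      calc vseq (n + 2 * t) = Mt (Mt (vseq (n + 2 * t))) := (hsq _).symm
        _ = Mt (vseq (n + t)) := by rw [e1]
        _ = vseq n := hMts n
    have hmod : ∀ n, vseq n = vseq (n % (2 * t)) := by
      intro n
      induction n using Nat.strong_induction_on with
      | _ n IH =>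
        rcases Nat.lt_or_ge n (2 * t) with hlt | hge
        · rw [Nat.mod_eq_of_lt hlt]
        · calc vseq n = vseq ((n - 2 * t) + 2 * t) := by rw [Nat.sub_add_cancel hge]
            _ = vseq (n - 2 * t) := hper2 _
            _ = vseq ((n - 2 * t) % (2 * t)) := IH _ (by omega)
            _ = vseq (n % (2 * t)) := by rw [Nat.mod_eq_sub_mod hge]
    -- pigeonhole
    refine hfinish (⋃ i ∈ Set.Iio (2 * t), (fun s : G => x i + s) ''
      (Subtype.val '' (T : Set ↥H)))
      (Set.Finite.biUnion (Set.finite_Iio _)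
        fun i _ => (hTsetfin.image Subtype.val).image _) ?_
    intro n
    apply Set.mem_biUnion (show n % (2 * t) ∈ Set.Iio (2 * t) from Nat.mod_lt _ (by omega))
    have hdT : (⟨x n, hmem n⟩ : ↥H) - ⟨x (n % (2 * t)), hmem _⟩ ∈ T := by
      have h0' : π ((⟨x n, hmem n⟩ : ↥H) - ⟨x (n % (2 * t)), hmem _⟩) = 0 := by
        rw [map_sub, sub_eq_zero]
        have := hmod n
        rw [hvseq] at this
        simpa using this
      have := LinearMap.mem_ker.mpr h0'
      rwa [Submodule.ker_mkQ] at this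
    refine ⟨x n - x (n % (2 * t)), ⟨_, hdT, by simp⟩, ?_⟩
    show x (n % (2 * t)) + (x n - x (n % (2 * t))) = x n
    abel

end Aux

theorem fan_from_relation {G : Type*} [AddCommGroup G] (φ : G →+ G)
    (hφ : Function.Injective φ) (x : ℕ → G) (hx : IsString (⇑φ) x)
    (k h : ℕ) (hk : 0 < k) (hkh : k < h)
    (hrel : x h - x 0 ∈ AddSubgroup.closure (x '' Set.Icc 1 k) ∨
      x h + x 0 ∈ AddSubgroup.closure (x '' Set.Icc 1 k)) :
    ∃ a : ℕ → ℤ, Function.Injective a ∧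
      (∀ j : ℕ, IsString (⇑φ) (fun n => a j • x n)) ∧
      Pairwise fun i j =>
        Disjoint (Set.range fun n => a i • x n) (Set.range fun n => a j • x n) := by
  classical
  obtain ⟨hinj, hstr⟩ := hx
  -- extract the relation with sign
  have hrel' : ∃ ε : ℤ, (ε = 1 ∨ ε = -1) ∧
      x h - ε • x 0 ∈ Submodule.span ℤ (x '' Set.Icc 1 k) := by
    rcases hrel with hr | hr
    · refine ⟨1, Or.inl rfl, ?_⟩
      rw [← Submodule.span_int_eq_addSubgroupClosure, Submodule.mem_toAddSubgroup] at hr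
      simpa using hr
    · refine ⟨-1, Or.inr rfl, ?_⟩
      rw [← Submodule.span_int_eq_addSubgroupClosure, Submodule.mem_toAddSubgroup] at hr
      have : x h - (-1 : ℤ) • x 0 = x h + x 0 := by simp
      rwa [this]
  obtain ⟨ε, hε, hmemspan⟩ := hrel'
  have himg : x '' Set.Icc 1 k = ↑(Finset.image x (Finset.Icc 1 k)) := by
    rw [Finset.coe_image, Finset.coe_Icc]
  rw [himg] at hmemspan
  obtain ⟨f, -, hf⟩ := Submodule.mem_span_finset.mp hmemspan
  have hsum_eq : ∑ i ∈ Finset.image x (Finset.Icc 1 k), f i • i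
      = ∑ i ∈ Finset.Icc 1 k, f (x i) • x i :=
    Finset.sum_image (fun i _ j _ hij => hinj hij)
  rw [hsum_eq] at hf
  have hrelsum : x h = ε • x 0 + ∑ i ∈ Finset.Icc 1 k, (fun i => f (x i)) i • x i := by
    have hh : ∑ i ∈ Finset.Icc 1 k, (fun i => f (x i)) i • x i = x h - ε • x 0 := by
      simpa using hf
    rw [hh]
    abel
  have hcore := core_lemma φ hφ x hinj hstr k h hk hkh ε hε (fun i => f (x i)) hrelsum
  have hdown := string_down φ x hstr
  refine ⟨fun j => (j : ℤ) + 1, ?_, ?_, ?_⟩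
  · intro i j hij
    have hij' : (i : ℤ) + 1 = (j : ℤ) + 1 := hij
    have : (i : ℤ) = (j : ℤ) := by omega
    exact_mod_cast this
  · intro j
    constructor
    · have key : ∀ n m : ℕ, n ≤ m → ((j : ℤ) + 1) • x n = ((j : ℤ) + 1) • x m → n = m := by
        intro n m hle heq
        obtain ⟨t, rfl⟩ := Nat.exists_eq_add_of_le hle
        have h0 : ((j : ℤ) + 1) • x 0 = ((j : ℤ) + 1) • x t := by
          refine hdown n _ _ 0 t ?_
          rw [Nat.zero_add]
          rw [show t + n = n + t from by omega]
          exact heq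
        have := hcore t ((j : ℤ) + 1) ((j : ℤ) + 1) (by omega) h0
        omega
      intro n m hnm
      dsimp at hnm
      rcases le_total n m with hle | hle
      · exact key n m hle hnm
      · exact (key m n hle hnm.symm).symm
    · intro n
      dsimp only
      rw [map_zsmul, hstr n]
  · intro i j hij
    rw [Set.disjoint_left]
    rintro g ⟨n, rfl⟩ ⟨m, hm⟩
    dsimp only at hm
    -- hm : (j+1) • x m = (i+1) • x n
    rcases le_total m n with hle | hle
    · obtain ⟨t, rfl⟩ := Nat.exists_eq_add_of_le hle
      have h0 : ((j : ℤ) + 1) • x 0 = ((i : ℤ) + 1) • x t := by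
        refine hdown m _ _ 0 t ?_
        rw [Nat.zero_add, show t + m = m + t from by omega]
        exact hm
      have := hcore t ((j : ℤ) + 1) ((i : ℤ) + 1) (by omega) h0
      omega
    · obtain ⟨t, rfl⟩ := Nat.exists_eq_add_of_le hle
      have h0 : ((i : ℤ) + 1) • x 0 = ((j : ℤ) + 1) • x t := by
        refine hdown n _ _ 0 t ?_
        rw [Nat.zero_add, show t + n = n + t from by omega]
        exact hm.symm
      have := hcore t ((i : ℤ) + 1) ((j : ℤ) + 1) (by omega) h0
      omega
end

section
/- Theorem: Let G be an abelian group, p a prime, and μ_p : G → G the multiplication-by-p endomorphism, μ_p(x) = p x. Then μ_p admits no string if and only if d_p(G) ⊆ t(G) and d_p(t_p(G)) = 0; equivalently, μ_p admits a string if and only if the largest p-divisible subgroup of G contains a non-torsion element or the p-primary component of G has a nonzero p-divisible subgroup. -/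
/-- The largest `p`-divisible subgroup of `G`: the join of all subgroups `H`
with `pH = H`. -/
def pDivCore (p : ℕ) (G : Type*) [AddCommGroup G] : AddSubgroup G :=
  sSup {H : AddSubgroup G | (fun y : G => p • y) '' (H : Set G) = (H : Set G)}

section Aux

variable {G : Type*} [AddCommGroup G]

private lemma chain_exists (p : ℕ) (D : Set G) (hD : (fun y : G => p • y) '' D = D)
    {g : G} (hg : g ∈ D) :
    ∃ x : ℕ → G, x 0 = g ∧ (∀ n, x n ∈ D) ∧ ∀ n, p • x (n + 1) = x n := by
  have step : ∀ y : {z : G // z ∈ D}, ∃ z : {z : G // z ∈ D}, p • (z : G) = (y : G) := by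
    intro y
    have hy : (y : G) ∈ (fun y : G => p • y) '' D := by rw [hD]; exact y.2
    obtain ⟨z, hz, hz'⟩ := hy
    exact ⟨⟨z, hz⟩, hz'⟩
  choose f hf using step
  refine ⟨fun n => (f^[n] ⟨g, hg⟩ : G), rfl, fun n => (f^[n] ⟨g, hg⟩).2, fun n => ?_⟩
  show p • (f^[n + 1] ⟨g, hg⟩ : G) = (f^[n] ⟨g, hg⟩ : G)
  rw [Function.iterate_succ_apply']
  exact hf _

private lemma chain_pow (p : ℕ) {x : ℕ → G} (hx : ∀ n, p • x (n + 1) = x n)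
    (n k : ℕ) : p ^ k • x (n + k) = x n := by
  induction k with
  | zero => simp
  | succ k ih =>
    show p ^ (k + 1) • x (n + k + 1) = x n
    rw [show p ^ (k + 1) = p ^ k * p from pow_succ p k, mul_smul, hx (n + k)]
    exact ih

private lemma inj_of_no_period {x : ℕ → G}
    (h : ∀ n d, 0 < d → x n ≠ x (n + d)) : Function.Injective x := by
  intro a b hab
  by_contra hne
  rcases Nat.lt_or_ge a b with h1 | h1
  · exact h a (b - a) (by omega) (by rw [show a + (b - a) = b by omega]; exact hab)
  · have h2 : b < a := lt_of_le_of_ne h1 (Ne.symm hne)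
    exact h b (a - b) (by omega) (by rw [show b + (a - b) = a by omega]; exact hab.symm)

private lemma period_fix (p : ℕ) {x : ℕ → G} (hx : ∀ n, p • x (n + 1) = x n)
    {n d : ℕ} (he : x n = x (n + d)) : p ^ d • x n = x n := by
  conv_lhs => rw [he]
  exact chain_pow p hx n d

private lemma sub_one_smul_eq_zero (m : ℕ) {z : G} (hm : m • z = z) : (m - 1) • z = 0 := by
  by_cases h : m = 0
  · subst h; simp
  · have h1 : (m - 1) • z + 1 • z = m • z := by
      rw [← add_nsmul, Nat.sub_add_cancel (Nat.one_le_iff_ne_zero.2 h)]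
    rw [hm, one_nsmul] at h1
    exact add_eq_right.mp h1

private lemma eq_zero_of_fix (p d k : ℕ) (hd : 0 < d) {z : G} (hz : p ^ d • z = z)
    (hk : p ^ k • z = 0) : z = 0 := by
  have hiter : ∀ j : ℕ, (p ^ d) ^ j • z = z := by
    intro j
    induction j with
    | zero => simp
    | succ j ih => rw [pow_succ, mul_smul, hz, ih]
  have h1 : p ^ (d * k) • z = z := by rw [pow_mul]; exact hiter k
  have hle : k ≤ d * k := Nat.le_mul_of_pos_left k hd
  have h2 : p ^ (d * k) • z = 0 := by
    rw [show d * k = (d * k - k) + k from (Nat.sub_add_cancel hle).symm, pow_add,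
      mul_smul, hk, smul_zero]
  rw [← h1]; exact h2

private lemma pDivCore_image (p : ℕ) (G : Type*) [AddCommGroup G] :
    (fun y : G => p • y) '' (pDivCore p G : Set G) = (pDivCore p G : Set G) := by
  set φ : G →+ G := AddMonoidHom.mk' (fun y : G => p • y) (fun a b => smul_add p a b) with hφ
  apply Set.Subset.antisymm
  · rintro _ ⟨y, hy, rfl⟩
    exact AddSubgroup.nsmul_mem _ hy p
  · have hle : pDivCore p G ≤ (pDivCore p G).map φ := by
      refine sSup_le fun H hH => ?_
      have hH' : H.map φ = H := SetLike.coe_injective (by exact hH)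
      calc H = H.map φ := hH'.symm
        _ ≤ (pDivCore p G).map φ := AddSubgroup.map_mono (le_sSup hH)
    intro y hy
    obtain ⟨z, hz, hz'⟩ := hle hy
    exact ⟨z, hz, hz'⟩

/-- The `p`-primary component as an `AddSubgroup`. -/
private def pPrim (p : ℕ) (G : Type*) [AddCommGroup G] : AddSubgroup G where
  carrier := {y : G | ∃ n : ℕ, p ^ n • y = 0}
  zero_mem' := ⟨0, smul_zero _⟩
  add_mem' := by
    rintro a b ⟨n, hn⟩ ⟨m, hm⟩
    refine ⟨n + m, ?_⟩
    have ha : p ^ (n + m) • a = 0 := by rw [pow_add, mul_comm, mul_smul, hn, smul_zero]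
    have hb : p ^ (n + m) • b = 0 := by rw [pow_add, mul_smul, hm, smul_zero]
    rw [smul_add, ha, hb, add_zero]
  neg_mem' := by
    rintro a ⟨n, hn⟩
    exact ⟨n, by rw [smul_neg, hn, neg_zero]⟩

end Aux

/-- `μ_p` admits no string iff `d_p(G) ⊆ t(G)` and `d_p(t_p(G)) = 0`, the latter
phrased as: every `p`-divisible subgroup of the `p`-primary component `t_p(G)`
is trivial. -/
theorem no_string_for_mul_p {G : Type*} [AddCommGroup G] (p : ℕ) (hp : p.Prime) :
    (¬ ∃ x : ℕ → G, IsString (fun y : G => p • y) x) ↔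
      ((pDivCore p G : Set G) ⊆ {y : G | ∃ n : ℕ, 0 < n ∧ n • y = 0}) ∧
      (∀ H : AddSubgroup G, (H : Set G) ⊆ {y : G | ∃ n : ℕ, p ^ n • y = 0} →
        (fun y : G => p • y) '' (H : Set G) = (H : Set G) → H = ⊥) := by
  constructor
  · intro hns
    constructor
    · -- d_p(G) ⊆ t(G)
      intro g hg
      by_contra hgt
      obtain ⟨x, hx0, hxD, hxc⟩ := chain_exists p _ (pDivCore_image p G) hg
      refine hns ⟨x, inj_of_no_period ?_, hxc⟩
      intro n d hd he
      have hpd : p ^ d • x n = x n := period_fix p hxc he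
      have hz : (p ^ d - 1) • x n = 0 := sub_one_smul_eq_zero _ hpd
      have hp2 : p ≤ p ^ d := Nat.le_self_pow hd.ne' p
      have h0 : p ^ n • x (0 + n) = x 0 := chain_pow p hxc 0 n
      rw [Nat.zero_add] at h0
      refine hgt ⟨p ^ d - 1, by have := hp.two_le; omega, ?_⟩
      rw [← hx0, ← h0, smul_comm, hz, smul_zero]
    · -- every p-divisible subgroup of t_p(G) is trivial
      intro H hsub hdiv
      by_contra hne
      have hex : ∃ g ∈ H, g ≠ 0 := by
        by_contra hall
        push_neg at hall
        exact hne (by ext z; simp only [AddSubgroup.mem_bot]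
                      exact ⟨fun hz => hall z hz, fun hz => hz ▸ H.zero_mem⟩)
      obtain ⟨g, hgH, hg0⟩ := hex
      obtain ⟨x, hx0, hxH, hxc⟩ := chain_exists p _ hdiv hgH
      refine hns ⟨x, inj_of_no_period ?_, hxc⟩
      intro n d hd he
      have hpd : p ^ d • x n = x n := period_fix p hxc he
      obtain ⟨k, hk⟩ := hsub (hxH n)
      have hxn : x n = 0 := eq_zero_of_fix p d k hd hpd hk
      have h0 : p ^ n • x (0 + n) = x 0 := chain_pow p hxc 0 n
      rw [Nat.zero_add] at h0
      apply hg0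
      rw [← hx0, ← h0, hxn, smul_zero]
  · rintro ⟨h1, h2⟩ ⟨x, hinj, hxc'⟩
    have hxc : ∀ n, p • x (n + 1) = x n := hxc'
    set φ : G →+ G := AddMonoidHom.mk' (fun y : G => p • y) (fun a b => smul_add p a b) with hφ
    -- the subgroup generated by the string is p-divisible
    set H : AddSubgroup G := AddSubgroup.closure (Set.range x) with hH
    have hHx : ∀ n, x n ∈ H := fun n => AddSubgroup.subset_closure ⟨n, rfl⟩
    have hHle : H ≤ H.map φ := by
      rw [hH]
      refine AddSubgroup.closure_le _ |>.2 ?_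
      rintro _ ⟨n, rfl⟩
      exact ⟨x (n + 1), hHx (n + 1), hxc n⟩
    have hHdiv : (fun y : G => p • y) '' (H : Set G) = (H : Set G) := by
      apply Set.Subset.antisymm
      · rintro _ ⟨y, hy, rfl⟩
        exact AddSubgroup.nsmul_mem _ hy p
      · intro y hy
        obtain ⟨z, hz, hz'⟩ := hHle hy
        exact ⟨z, hz, hz'⟩
    have hHD : H ≤ pDivCore p G := le_sSup hHdiv
    -- every x n is torsion
    obtain ⟨m, hm0, hmx⟩ := h1 (hHD (hHx 0))
    have hmne : m ≠ 0 := hm0.ne'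
    set a : ℕ := m.factorization p with ha
    set q : ℕ := m / p ^ a with hq
    have hq1 : p ^ a * q = m := Nat.ordProj_mul_ordCompl_eq_self m p
    have hqpos : 0 < q := Nat.ordCompl_pos p hmne
    have hpq : ¬ p ∣ q := Nat.not_dvd_ordCompl hp hmne
    set y : ℕ → G := fun n => q • x n with hy
    have hyc : ∀ n, p • y (n + 1) = y n := by
      intro n
      show p • q • x (n + 1) = q • x n
      rw [smul_comm, hxc]
    have hyt : ∀ n, p ^ (a + n) • y n = 0 := by
      intro n
      have h0 : p ^ n • x (0 + n) = x 0 := chain_pow p hxc 0 n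
      rw [Nat.zero_add] at h0
      show p ^ (a + n) • q • x n = 0
      rw [pow_add, mul_smul, smul_comm (p ^ n) q, h0, ← mul_smul, hq1, hmx]
    by_cases hall : ∀ n, y n = 0
    · -- all y n = 0 : then x is periodic, contradiction with injectivity
      have hco : Nat.Coprime p q := (Nat.Prime.coprime_iff_not_dvd hp).mpr hpq
      set d : ℕ := q.totient with hd
      have hdpos : 0 < d := Nat.totient_pos.mpr hqpos
      have hmod : p ^ d ≡ 1 [MOD q] := Nat.ModEq.pow_totient hco
      have hone : 1 ≤ p ^ d := Nat.one_le_pow _ _ hp.pos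
      have hdvd : q ∣ p ^ d - 1 := (Nat.modEq_iff_dvd' hone).mp hmod.symm
      obtain ⟨c, hc⟩ := hdvd
      have hall' : ∀ n, q • x n = 0 := hall
      have hper : x 0 = x (0 + d) := by
        have h0 : p ^ d • x (0 + d) = x 0 := chain_pow p hxc 0 d
        rw [← h0]
        have hsplit : p ^ d • x (0 + d) = (p ^ d - 1) • x (0 + d) + x (0 + d) := by
          conv_lhs => rw [show p ^ d = (p ^ d - 1) + 1 from (Nat.sub_add_cancel hone).symm]
          rw [add_nsmul, one_nsmul]
        rw [hsplit, hc, mul_comm, mul_smul, hall' (0 + d), smul_zero, zero_add]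
      have := hinj hper
      omega
    · push_neg at hall
      obtain ⟨N, hN⟩ := hall
      set K : AddSubgroup G := AddSubgroup.closure (Set.range fun k => y (N + k)) with hK
      have hKy : ∀ k, y (N + k) ∈ K := fun k => AddSubgroup.subset_closure ⟨k, rfl⟩
      have hKsub : (K : Set G) ⊆ {z : G | ∃ n : ℕ, p ^ n • z = 0} := by
        have : K ≤ pPrim p G := by
          rw [hK]
          refine AddSubgroup.closure_le _ |>.2 ?_
          rintro _ ⟨k, rfl⟩
          exact ⟨a + (N + k), hyt (N + k)⟩
        exact fun z hz => this hz
      have hKle : K ≤ K.map φ := by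
        rw [hK]
        refine AddSubgroup.closure_le _ |>.2 ?_
        rintro _ ⟨k, rfl⟩
        exact ⟨y (N + (k + 1)), hKy (k + 1), hyc (N + k)⟩
      have hKdiv : (fun z : G => p • z) '' (K : Set G) = (K : Set G) := by
        apply Set.Subset.antisymm
        · rintro _ ⟨z, hz, rfl⟩
          exact AddSubgroup.nsmul_mem _ hz p
        · intro z hz
          obtain ⟨w, hw, hw'⟩ := hKle hz
          exact ⟨w, hw, hw'⟩
      have hKbot : K = ⊥ := h2 K hKsub hKdiv
      have : y N ∈ K := hKy 0
      rw [hKbot, AddSubgroup.mem_bot] at this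
      exact hN this
end
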